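/- arXiv:2109.02083 — 4 statements merged into one kernel-verified Lean document; each statement's English description precedes it below -/
import Mathlib

section
/- If f : ℝ → ℝ is r-times continuously differentiable with f and f^{(r)} bounded (and all intermediate derivatives bounded), then for every δ > 0, ‖(I - T_δ)^r f‖ ≤ 2^{-r} δ^r ‖f^{(r)}‖ in the sup norm. -/
/-- Forward Steklov operator `T_δ f(x) = (1/δ) ∫₀^δ f(x+t) dt`. -/
noncomputable def steklov (δ : ℝ) (f : ℝ → ℝ) : ℝ → ℝ :=
  fun x => (1 / δ) * ∫ t in (0:ℝ)..δ, f (x + t)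

/-- The difference operator `(I - T_δ) f`. -/
noncomputable def steklovDiff (δ : ℝ) (f : ℝ → ℝ) : ℝ → ℝ :=
  fun x => f x - steklov δ f x

open intervalIntegral MeasureTheory

section helpers

variable {δ : ℝ} {f : ℝ → ℝ}

lemma steklov_eq (hf : Continuous f) (x : ℝ) :
    steklov δ f x = (1 / δ) * ((∫ t in (0:ℝ)..(x + δ), f t) - ∫ t in (0:ℝ)..x, f t) := by
  unfold steklov
  rw [intervalIntegral.integral_comp_add_left]
  congr 1
  rw [intervalIntegral.integral_interval_sub_left (hf.intervalIntegrable _ _)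
    (hf.intervalIntegrable _ _)]
  simp

lemma hasDerivAt_primitive (hf : Continuous f) (y : ℝ) :
    HasDerivAt (fun u => ∫ t in (0:ℝ)..u, f t) (f y) y :=
  intervalIntegral.integral_hasDerivAt_right (hf.intervalIntegrable _ _)
    (hf.stronglyMeasurableAtFilter _ _) hf.continuousAt

lemma hasDerivAt_steklov (hf : Continuous f) (x : ℝ) :
    HasDerivAt (steklov δ f) ((1 / δ) * (f (x + δ) - f x)) x := by
  have h1 : HasDerivAt (fun u => ∫ t in (0:ℝ)..u, f t) (f x) x := hasDerivAt_primitive hf x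
  have h2 : HasDerivAt (fun u => ∫ t in (0:ℝ)..(u + δ), f t) (f (x + δ)) x := by
    have := (hasDerivAt_primitive hf (x + δ)).comp x ((hasDerivAt_id x).add_const δ)
    simpa [Function.comp_def] using this
  have h3 := ((h2.sub h1).const_mul (1 / δ))
  have : steklov δ f = fun u => (1 / δ) * ((∫ t in (0:ℝ)..(u + δ), f t) - ∫ t in (0:ℝ)..u, f t) :=
    funext (steklov_eq hf)
  rw [this]
  exact h3

lemma steklov_deriv_eq (hd : Differentiable ℝ f) (hd' : Continuous (deriv f)) (x : ℝ) :
    steklov δ (deriv f) x = (1 / δ) * (f (x + δ) - f x) := by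
  unfold steklov
  rw [intervalIntegral.integral_comp_add_left,
    intervalIntegral.integral_deriv_eq_sub (fun t _ => hd t) (hd'.intervalIntegrable _ _)]
  simp

lemma deriv_steklovDiff (hd : Differentiable ℝ f) (hd' : Continuous (deriv f)) :
    deriv (steklovDiff δ f) = steklovDiff δ (deriv f) := by
  funext x
  have h : HasDerivAt (steklovDiff δ f)
      (deriv f x - (1 / δ) * (f (x + δ) - f x)) x := by
    have := ((hd x).hasDerivAt.sub (hasDerivAt_steklov (δ := δ) hd.continuous x))
    exact this
  rw [h.deriv, steklovDiff, steklov_deriv_eq hd hd' x]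

lemma contDiff_steklov {n : ℕ} (hf : ContDiff ℝ n f) : ContDiff ℝ n (steklov δ f) := by
  set F : ℝ → ℝ := fun u => ∫ t in (0:ℝ)..u, f t with hF
  have hFd : Differentiable ℝ F := fun y => (hasDerivAt_primitive hf.continuous y).differentiableAt
  have hder : deriv F = f := funext fun y => (hasDerivAt_primitive hf.continuous y).deriv
  have hFC : ContDiff ℝ (n + 1 : ℕ) F := by
    have : ((n + 1 : ℕ) : WithTop ℕ∞) = (n : WithTop ℕ∞) + 1 := by push_cast; ring
    rw [this, contDiff_succ_iff_deriv]
    exact ⟨hFd, by simp, hder ▸ hf⟩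
  have heq : steklov δ f = fun x => (1 / δ) * (F (x + δ) - F x) := funext (steklov_eq hf.continuous)
  rw [heq]
  have hc : ContDiff ℝ (n + 1 : ℕ) fun x => (1 / δ) * (F (x + δ) - F x) :=
    contDiff_const.mul ((hFC.comp (contDiff_id.add contDiff_const)).sub hFC)
  exact hc.of_le (by exact_mod_cast Nat.le_succ n)

lemma contDiff_steklovDiff {n : ℕ} (hf : ContDiff ℝ n f) : ContDiff ℝ n (steklovDiff δ f) :=
  hf.sub (contDiff_steklov hf)

lemma iteratedDeriv_steklovDiff {r : ℕ} (hf : ContDiff ℝ r f) :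
    ∀ k, k ≤ r → iteratedDeriv k (steklovDiff δ f) = steklovDiff δ (iteratedDeriv k f) := by
  intro k
  induction k with
  | zero => intro _; simp [iteratedDeriv_zero]
  | succ k ih =>
    intro hk
    rw [iteratedDeriv_succ, ih (le_of_lt (Nat.lt_of_succ_le hk))]
    have hd : Differentiable ℝ (iteratedDeriv k f) :=
      hf.differentiable_iteratedDeriv k (by exact_mod_cast Nat.lt_of_succ_le hk)
    have hd' : Continuous (deriv (iteratedDeriv k f)) := by
      rw [← iteratedDeriv_succ]
      exact hf.continuous_iteratedDeriv (k + 1) (by exact_mod_cast hk)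
    rw [deriv_steklovDiff hd hd', ← iteratedDeriv_succ]

lemma steklovDiff_bound (hd : Differentiable ℝ f) {M : ℝ}
    (hM : ∀ y, |deriv f y| ≤ M) (hδ : 0 < δ) (x : ℝ) :
    |steklovDiff δ f x| ≤ δ / 2 * M := by
  have hcomp : Continuous fun t => f (x + t) := hd.continuous.comp (by continuity)
  have key : steklovDiff δ f x = (1 / δ) * ∫ t in (0:ℝ)..δ, (f x - f (x + t)) := by
    rw [intervalIntegral.integral_sub (intervalIntegrable_const) (hcomp.intervalIntegrable _ _)]
    simp only [intervalIntegral.integral_const, sub_zero, smul_eq_mul]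
    unfold steklovDiff steklov
    field_simp
  have hbound : ∀ t ∈ Set.Icc (0:ℝ) δ, |f x - f (x + t)| ≤ M * t := by
    intro t ht
    have := Convex.norm_image_sub_le_of_norm_deriv_le (s := Set.univ) (f := f)
      (fun y _ => hd y) (fun y _ => hM y) convex_univ (Set.mem_univ (x + t)) (Set.mem_univ x)
    calc |f x - f (x + t)| ≤ M * |x - (x + t)| := this
      _ = M * t := by rw [show x - (x + t) = -t by ring, abs_neg, abs_of_nonneg ht.1]
  have habs : |∫ t in (0:ℝ)..δ, (f x - f (x + t))| ≤ M * (δ ^ 2 / 2) := by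
    calc |∫ t in (0:ℝ)..δ, (f x - f (x + t))|
        ≤ ∫ t in (0:ℝ)..δ, |f x - f (x + t)| :=
          intervalIntegral.abs_integral_le_integral_abs hδ.le
      _ ≤ ∫ t in (0:ℝ)..δ, M * t := by
          apply intervalIntegral.integral_mono_on hδ.le
          · exact ((continuous_const.sub hcomp).abs).intervalIntegrable _ _
          · exact (continuous_const.mul continuous_id).intervalIntegrable _ _
          · exact hbound
      _ = M * (δ ^ 2 / 2) := by
          rw [intervalIntegral.integral_const_mul]
          simp [integral_id]
  rw [key, abs_mul, abs_of_pos (by positivity : (0:ℝ) < 1 / δ)]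
  calc (1 / δ) * |∫ t in (0:ℝ)..δ, (f x - f (x + t))|
      ≤ (1 / δ) * (M * (δ ^ 2 / 2)) := by
        apply mul_le_mul_of_nonneg_left habs (by positivity)
    _ = δ / 2 * M := by field_simp

lemma steklovDiff_crude_bound (hf : Continuous f) {M : ℝ}
    (hM : ∀ y, |f y| ≤ M) (hδ : 0 < δ) (x : ℝ) :
    |steklovDiff δ f x| ≤ 2 * M := by
  have hcomp : Continuous fun t => f (x + t) := hf.comp (by continuity)
  have hstek : |steklov δ f x| ≤ M := by
    unfold steklov
    rw [abs_mul, abs_of_pos (by positivity : (0:ℝ) < 1 / δ)]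
    have h1 : |∫ t in (0:ℝ)..δ, f (x + t)| ≤ ∫ t in (0:ℝ)..δ, |f (x + t)| :=
      intervalIntegral.abs_integral_le_integral_abs hδ.le
    have h2 : ∫ t in (0:ℝ)..δ, |f (x + t)| ≤ ∫ t in (0:ℝ)..δ, M := by
      apply intervalIntegral.integral_mono_on hδ.le
      · exact hcomp.abs.intervalIntegrable _ _
      · exact intervalIntegrable_const
      · exact fun t _ => hM (x + t)
    have h3 : (∫ t in (0:ℝ)..δ, M) = δ * M := by simp [mul_comm]
    calc (1 / δ) * |∫ t in (0:ℝ)..δ, f (x + t)| ≤ (1 / δ) * (δ * M) := by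
          apply mul_le_mul_of_nonneg_left (h1.trans (h3 ▸ h2)) (by positivity)
      _ = M := by field_simp
  calc |steklovDiff δ f x| ≤ |f x| + |steklov δ f x| := abs_sub _ _
    _ ≤ M + M := add_le_add (hM x) hstek
    _ = 2 * M := by ring

lemma key_bound (δ : ℝ) (hδ : 0 < δ) :
    ∀ (r : ℕ) (f : ℝ → ℝ), ContDiff ℝ r f →
      (∀ k ≤ r, BddAbove (Set.range fun x => |iteratedDeriv k f x|)) →
      ∀ x, |(steklovDiff δ)^[r] f x| ≤ (δ / 2) ^ r * ⨆ x, |iteratedDeriv r f x| := by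
  intro r
  induction r with
  | zero =>
    intro f hf hb x
    simpa using le_ciSup (by simpa using hb 0 le_rfl) x
  | succ r ih =>
    intro f hf hb x
    set g := steklovDiff δ f with hg
    set M := ⨆ x, |iteratedDeriv (r + 1) f x| with hMdef
    have hMb : ∀ y, |iteratedDeriv (r + 1) f y| ≤ M := fun y => le_ciSup (hb (r + 1) le_rfl) y
    have hM0 : 0 ≤ M := (abs_nonneg _).trans (hMb 0)
    have hfr : ContDiff ℝ r f := hf.of_le (by exact_mod_cast Nat.le_succ r)
    have hgC : ContDiff ℝ r g := contDiff_steklovDiff hfr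
    have hcomm : ∀ k, k ≤ r → iteratedDeriv k g = steklovDiff δ (iteratedDeriv k f) :=
      iteratedDeriv_steklovDiff hfr
    have hbg : ∀ k ≤ r, BddAbove (Set.range fun x => |iteratedDeriv k g x|) := by
      intro k hk
      obtain ⟨C, hC⟩ := hb k (hk.trans (Nat.le_succ r))
      rw [mem_upperBounds] at hC
      have hCb : ∀ y, |iteratedDeriv k f y| ≤ C := fun y => hC _ ⟨y, rfl⟩
      refine ⟨2 * C, ?_⟩
      rintro _ ⟨y, rfl⟩
      rw [hcomm k hk]
      exact steklovDiff_crude_bound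
        (hfr.continuous_iteratedDeriv k (by exact_mod_cast hk)) hCb hδ y
    have hIH := ih g hgC hbg x
    have hlast : (⨆ x, |iteratedDeriv r g x|) ≤ δ / 2 * M := by
      apply ciSup_le
      intro y
      rw [hcomm r le_rfl]
      have hd : Differentiable ℝ (iteratedDeriv r f) :=
        hf.differentiable_iteratedDeriv r (by exact_mod_cast Nat.lt_succ_self r)
      have hMd : ∀ z, |deriv (iteratedDeriv r f) z| ≤ M := by
        intro z
        rw [← iteratedDeriv_succ]
        exact hMb z
      exact steklovDiff_bound hd hMd hδ y
    calc |(steklovDiff δ)^[r + 1] f x| = |(steklovDiff δ)^[r] g x| := by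
          rw [Function.iterate_succ_apply]
      _ ≤ (δ / 2) ^ r * ⨆ x, |iteratedDeriv r g x| := hIH
      _ ≤ (δ / 2) ^ r * (δ / 2 * M) := by
          apply mul_le_mul_of_nonneg_left hlast (by positivity)
      _ = (δ / 2) ^ (r + 1) * M := by ring

end helpers

theorem iter_diff_sup_le_deriv (f : ℝ → ℝ) (r : ℕ) (hr : 1 ≤ r)
    (hf : ContDiff ℝ (r : ℕ∞) f)
    (hb : ∀ k ≤ r, BddAbove (Set.range fun x => |iteratedDeriv k f x|))
    (δ : ℝ) (hδ : 0 < δ) :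
    (⨆ x, |(steklovDiff δ)^[r] f x|) ≤ δ ^ r / 2 ^ r * ⨆ x, |iteratedDeriv r f x| := by
  have hf' : ContDiff ℝ (r : ℕ) f := by exact_mod_cast hf
  have h := key_bound δ hδ r f hf' hb
  have : (⨆ x, |(steklovDiff δ)^[r] f x|) ≤ (δ / 2) ^ r * ⨆ x, |iteratedDeriv r f x| :=
    ciSup_le h
  calc (⨆ x, |(steklovDiff δ)^[r] f x|) ≤ (δ / 2) ^ r * ⨆ x, |iteratedDeriv r f x| := this
    _ = δ ^ r / 2 ^ r * ⨆ x, |iteratedDeriv r f x| := by rw [div_pow]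
end

section
/- Let K₁(f, δ) = inf over continuously differentiable g with g, g' bounded of (‖f - g‖ + δ ‖g'‖), in sup norm. Then for every bounded continuous f : ℝ → ℝ and δ > 0: (1/36) K₁(f, δ) ≤ ‖f - T_δ f‖ ≤ 2 K₁(f, δ). -/
open MeasureTheory intervalIntegral

/-- Peetre K-functional of order 1 (sup norm), taken over C¹ functions `g`
with `g` and `g'` bounded. -/
noncomputable def K1 (δ : ℝ) (f : ℝ → ℝ) : ℝ :=
  sInf {c : ℝ | ∃ g : ℝ → ℝ, ContDiff ℝ 1 g ∧
    BddAbove (Set.range fun x => |g x|) ∧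
    BddAbove (Set.range fun x => |deriv g x|) ∧
    c = (⨆ x, |f x - g x|) + δ * ⨆ x, |deriv g x|}

section Helpers


variable {δ : ℝ} {f g : ℝ → ℝ}

lemma abs_sub'' (a b : ℝ) : |a - b| ≤ |a| + |b| := by
  simpa [sub_eq_add_neg] using abs_add_le a (-b)

lemma steklov_eq_sub (hf : Continuous f) (δ x : ℝ) :
    steklov δ f x = (1 / δ) * ((∫ u in (0:ℝ)..(x + δ), f u) - ∫ u in (0:ℝ)..x, f u) := by
  unfold steklov
  congr 1
  rw [intervalIntegral.integral_comp_add_left f, add_zero,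
    intervalIntegral.integral_interval_sub_left (hf.intervalIntegrable _ _)
      (hf.intervalIntegrable _ _)]

lemma steklov_hasDerivAt (hf : Continuous f) (x : ℝ) :
    HasDerivAt (steklov δ f) ((f (x + δ) - f x) / δ) x := by
  have hfun : steklov δ f =
      fun y => (1 / δ) * ((∫ u in (0:ℝ)..(y + δ), f u) - ∫ u in (0:ℝ)..y, f u) :=
    funext (steklov_eq_sub hf δ)
  rw [hfun]
  have h1 : HasDerivAt (fun y : ℝ => ∫ u in (0:ℝ)..(y + δ), f u) (f (x + δ)) x :=
    HasDerivAt.comp_add_const x δ (hf.integral_hasStrictDerivAt 0 (x + δ)).hasDerivAt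
  have h2 : HasDerivAt (fun y : ℝ => ∫ u in (0:ℝ)..y, f u) (f x) x :=
    (hf.integral_hasStrictDerivAt 0 x).hasDerivAt
  have := (h1.sub h2).const_mul (1 / δ)
  rw [show (f (x + δ) - f x) / δ = 1 / δ * (f (x + δ) - f x) by ring]
  exact this

lemma steklov_continuous (hf : Continuous f) : Continuous (steklov δ f) := by
  have h : Differentiable ℝ (steklov δ f) := fun x => (steklov_hasDerivAt hf x).differentiableAt
  exact h.continuous

lemma steklov_abs_le (hf : Continuous f) (hδ : 0 < δ) {C : ℝ}
    (hC : ∀ y, |f y| ≤ C) (x : ℝ) : |steklov δ f x| ≤ C := by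
  have h := intervalIntegral.norm_integral_le_of_norm_le_const
    (a := (0:ℝ)) (b := δ) (C := C) (f := fun t => f (x + t)) (fun t _ => hC _)
  simp only [Real.norm_eq_abs] at h
  rw [show |δ - 0| = δ by rw [sub_zero, abs_of_pos hδ]] at h
  unfold steklov
  rw [abs_mul, abs_of_pos (by positivity : (0:ℝ) < 1 / δ)]
  calc 1 / δ * |∫ t in (0:ℝ)..δ, f (x + t)| ≤ 1 / δ * (C * δ) :=
        mul_le_mul_of_nonneg_left h (by positivity)
    _ = C := by field_simp

lemma steklov_sub (hf : Continuous f) (hg : Continuous g) (δ x : ℝ) :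
    steklov δ (fun y => f y - g y) x = steklov δ f x - steklov δ g x := by
  unfold steklov
  rw [← mul_sub]
  congr 1
  exact intervalIntegral.integral_sub ((hf.comp (by continuity)).intervalIntegrable _ _)
    ((hg.comp (by continuity)).intervalIntegrable _ _)

lemma abs_shift_le (hf : Continuous f) (hδ : 0 < δ) {M E : ℝ}
    (hM : ∀ y, |f y| ≤ M) (hE : ∀ y, |f y - steklov δ f y| ≤ E) (x : ℝ) :
    |f (x + δ) - f x| ≤ 12 * E := by
  have hδ0 : δ ≠ 0 := ne_of_gt hδ
  set g : ℝ → ℝ := steklov δ f with hgdef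
  have hgc : Continuous g := steklov_continuous hf
  have hg' : ∀ y, HasDerivAt g ((f (y + δ) - f y) / δ) y := steklov_hasDerivAt hf
  set G : ℝ → ℝ := steklov δ g with hGdef
  have hGc : Continuous G := steklov_continuous hgc
  set dG : ℝ → ℝ := fun y => (g (y + δ) - g y) / δ with hdGdef
  have hG' : ∀ y, HasDerivAt G (dG y) y := steklov_hasDerivAt hgc
  have hdGc : Continuous dG := ((hgc.comp (by continuity)).sub hgc).div_const δ
  have hdG' : ∀ y, HasDerivAt dG
      (((f (y + δ + δ) - f (y + δ)) / δ - (f (y + δ) - f y) / δ) / δ) y := by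
    intro y
    have h1 : HasDerivAt (fun z => g (z + δ)) ((f (y + δ + δ) - f (y + δ)) / δ) y :=
      HasDerivAt.comp_add_const y δ (hg' (y + δ))
    exact (h1.sub (hg' y)).div_const δ
  -- D : sup of the shift differences
  have hbddD : BddAbove (Set.range fun y => |f (y + δ) - f y|) := by
    refine ⟨2 * M, ?_⟩
    rintro r ⟨y, rfl⟩
    have h1 := hM (y + δ); have h2 := hM y
    calc |f (y + δ) - f y| ≤ |f (y + δ)| + |f y| := abs_sub'' _ _
      _ ≤ 2 * M := by linarith
  set D : ℝ := ⨆ y, |f (y + δ) - f y| with hDdef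
  have hD : ∀ y, |f (y + δ) - f y| ≤ D := fun y => le_ciSup hbddD y
  have hDnonneg : 0 ≤ D := le_trans (abs_nonneg _) (hD 0)
  have hEnonneg : 0 ≤ E := le_trans (abs_nonneg _) (hE 0)
  set Q : ℝ := 2 * D / (δ * δ) with hQdef
  have hQnonneg : 0 ≤ Q := by positivity
  have hQbound : ∀ y, |((f (y + δ + δ) - f (y + δ)) / δ - (f (y + δ) - f y) / δ) / δ| ≤ Q := by
    intro y
    have h1 : |(f (y + δ + δ) - f (y + δ)) / δ| ≤ D / δ := by
      rw [abs_div, abs_of_pos hδ]; gcongr; exact hD (y + δ)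
    have h2 : |(f (y + δ) - f y) / δ| ≤ D / δ := by
      rw [abs_div, abs_of_pos hδ]; gcongr; exact hD y
    rw [abs_div, abs_of_pos hδ]
    calc |(f (y + δ + δ) - f (y + δ)) / δ - (f (y + δ) - f y) / δ| / δ
        ≤ (D / δ + D / δ) / δ := by
          gcongr
          exact le_trans (abs_sub'' _ _) (add_le_add h1 h2)
      _ = Q := by rw [hQdef]; field_simp; ring
  have hdGlip : ∀ s t : ℝ, |dG t - dG s| ≤ Q * |t - s| := by
    intro s t
    have := (convex_univ : Convex ℝ (Set.univ : Set ℝ)).norm_image_sub_le_of_norm_deriv_le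
      (f := dG) (fun y _ => (hdG' y).differentiableAt)
      (fun y _ => by rw [Real.norm_eq_abs, (hdG' y).deriv]; exact hQbound y)
      (Set.mem_univ s) (Set.mem_univ t)
    simpa [Real.norm_eq_abs] using this
  -- the key quantitative bound on dG
  have hdG_bound : ∀ z, δ * |dG z| ≤ 2 * E + Q * δ ^ 2 / 3 := by
    intro z
    -- Taylor-type bound
    have cA : Continuous (fun t : ℝ => dG (z + t)) :=
      hdGc.comp (continuous_const.add continuous_id)
    have hφ : ∀ s ∈ Set.Icc (0:ℝ) δ, |G (z + s) - G z - s * dG z| ≤ Q / 2 * s ^ 2 := by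
      intro s hs
      have iA : IntervalIntegrable (fun t : ℝ => dG (z + t)) volume 0 s :=
        cA.intervalIntegrable _ _
      have hftc : ∫ t in (0:ℝ)..s, dG (z + t) = G (z + s) - G z := by
        have hder : ∀ t ∈ Set.uIcc (0:ℝ) s, HasDerivAt (fun u => G (z + u)) (dG (z + t)) t :=
          fun t _ => HasDerivAt.comp_const_add z t (hG' (z + t))
        have h := intervalIntegral.integral_eq_sub_of_hasDerivAt hder iA
        simpa using h
      have hid : G (z + s) - G z - s * dG z = ∫ t in (0:ℝ)..s, (dG (z + t) - dG z) := by
        rw [intervalIntegral.integral_sub iA intervalIntegrable_const, hftc,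
          intervalIntegral.integral_const]
        simp only [smul_eq_mul, sub_zero]
      rw [hid]
      calc |∫ t in (0:ℝ)..s, (dG (z + t) - dG z)|
          ≤ ∫ t in (0:ℝ)..s, |dG (z + t) - dG z| :=
            intervalIntegral.abs_integral_le_integral_abs hs.1
        _ ≤ ∫ t in (0:ℝ)..s, Q * t := by
            apply intervalIntegral.integral_mono_on hs.1
              ((cA.sub continuous_const).abs.intervalIntegrable _ _)
              ((continuous_const.mul continuous_id).intervalIntegrable _ _)
            intro t ht
            calc |dG (z + t) - dG z| ≤ Q * |z + t - z| := hdGlip z (z + t)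
              _ = Q * t := by rw [add_sub_cancel_left, abs_of_nonneg ht.1]
        _ = Q / 2 * s ^ 2 := by
            rw [intervalIntegral.integral_const_mul, integral_id]
            ring
    -- average the Taylor bound
    have i1 : IntervalIntegrable (fun s : ℝ => G (z + s)) volume 0 δ :=
      (hGc.comp (continuous_const.add continuous_id)).intervalIntegrable _ _
    have i2 : IntervalIntegrable (fun _ : ℝ => G z) volume 0 δ := intervalIntegrable_const
    have i3 : IntervalIntegrable (fun s : ℝ => s * dG z) volume 0 δ :=
      (continuous_id.mul continuous_const).intervalIntegrable _ _
    have hintφ : steklov δ G z - G z - δ / 2 * dG z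
        = (1 / δ) * ∫ s in (0:ℝ)..δ, (G (z + s) - G z - s * dG z) := by
      rw [intervalIntegral.integral_sub (i1.sub i2) i3, intervalIntegral.integral_sub i1 i2,
        intervalIntegral.integral_mul_const, integral_id]
      have hG0 : (∫ s in (0:ℝ)..δ, G (z + s)) = δ * steklov δ G z := by
        unfold steklov; field_simp
      rw [hG0]
      simp only [intervalIntegral.integral_const, smul_eq_mul, sub_zero]
      field_simp
      ring
    have habsφ : |∫ s in (0:ℝ)..δ, (G (z + s) - G z - s * dG z)| ≤ Q / 2 * δ ^ 3 / 3 := by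
      calc |∫ s in (0:ℝ)..δ, (G (z + s) - G z - s * dG z)|
          ≤ ∫ s in (0:ℝ)..δ, |G (z + s) - G z - s * dG z| :=
            intervalIntegral.abs_integral_le_integral_abs hδ.le
        _ ≤ ∫ s in (0:ℝ)..δ, Q / 2 * s ^ 2 := by
            apply intervalIntegral.integral_mono_on hδ.le
              (((i1.sub i2).sub i3).abs)
              ((continuous_const.mul (continuous_pow 2)).intervalIntegrable _ _)
            exact hφ
        _ = Q / 2 * δ ^ 3 / 3 := by
            rw [intervalIntegral.integral_const_mul, integral_pow]
            norm_num
            ring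
    have hAGG : |steklov δ G z - G z| ≤ E := by
      have hpt : ∀ y, |G y - g y| ≤ E := by
        intro y
        have h1 : G y - g y = steklov δ (fun w => g w - f w) y := by
          rw [steklov_sub hgc hf δ y]
        rw [h1]
        exact steklov_abs_le (hgc.sub hf) hδ
          (fun w => by rw [Pi.sub_apply, abs_sub_comm]; exact hE w) y
      have h1 : steklov δ G z - G z = steklov δ (fun y => G y - g y) z := by
        rw [steklov_sub hGc hgc δ z]
      rw [h1]
      exact steklov_abs_le (hGc.sub hgc) hδ hpt z
    have hstep : |steklov δ G z - G z - δ / 2 * dG z| ≤ Q / 2 * δ ^ 2 / 3 := by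
      rw [hintφ, abs_mul, abs_of_pos (by positivity : (0:ℝ) < 1 / δ)]
      calc 1 / δ * |∫ s in (0:ℝ)..δ, (G (z + s) - G z - s * dG z)|
          ≤ 1 / δ * (Q / 2 * δ ^ 3 / 3) := mul_le_mul_of_nonneg_left habsφ (by positivity)
        _ = Q / 2 * δ ^ 2 / 3 := by field_simp
    have habs : δ / 2 * |dG z| ≤ E + Q / 2 * δ ^ 2 / 3 := by
      have hrw : δ / 2 * dG z = (steklov δ G z - G z) - (steklov δ G z - G z - δ / 2 * dG z) := by
        ring
      have h7 : |δ / 2 * dG z| ≤ E + Q / 2 * δ ^ 2 / 3 := by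
        rw [hrw]
        exact le_trans (abs_sub'' _ _) (add_le_add hAGG hstep)
      rwa [abs_mul, abs_of_pos (by positivity : (0:ℝ) < δ / 2)] at h7
    nlinarith [abs_nonneg (dG z)]
  -- combine
  have hchain : ∀ y, |f (y + δ) - f y| ≤ 4 * E + 2 / 3 * D := by
    intro y
    have h2 : g (y + δ) - g y = δ * dG y := by rw [hdGdef]; field_simp
    have h1 : |f (y + δ) - f y|
        ≤ |f (y + δ) - g (y + δ)| + |g (y + δ) - g y| + |g y - f y| := by
      have : f (y + δ) - f y
          = (f (y + δ) - g (y + δ)) + (g (y + δ) - g y) + (g y - f y) := by ring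
      rw [this]
      exact abs_add_three _ _ _
    have h3 : |g (y + δ) - g y| ≤ 2 * E + Q * δ ^ 2 / 3 := by
      rw [h2, abs_mul, abs_of_pos hδ]
      exact hdG_bound y
    have h4 : Q * δ ^ 2 / 3 = 2 / 3 * D := by rw [hQdef]; field_simp
    have h5 := hE (y + δ)
    have h6 : |g y - f y| ≤ E := by rw [abs_sub_comm]; exact hE y
    rw [h4] at h3
    linarith
  have hDle : D ≤ 4 * E + 2 / 3 * D := ciSup_le hchain
  have hD12 : D ≤ 12 * E := by linarith
  exact le_trans (hD x) hD12

end Helpers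

theorem K1_equiv (f : ℝ → ℝ) (hf : Continuous f)
    (hb : BddAbove (Set.range fun x => |f x|)) (δ : ℝ) (hδ : 0 < δ) :
    (1 / 36) * K1 δ f ≤ (⨆ x, |f x - steklov δ f x|) ∧
    (⨆ x, |f x - steklov δ f x|) ≤ 2 * K1 δ f := by
  obtain ⟨M, hM0⟩ := hb
  have hM : ∀ x, |f x| ≤ M := fun x => hM0 ⟨x, rfl⟩
  set g : ℝ → ℝ := steklov δ f with hgdef
  have hgc : Continuous g := steklov_continuous hf
  have hgbd : ∀ x, |g x| ≤ M := steklov_abs_le hf hδ hM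
  have hbdd0 : BddAbove (Set.range fun x => |f x - g x|) := by
    refine ⟨2 * M, ?_⟩; rintro r ⟨x, rfl⟩
    exact le_trans (abs_sub'' _ _) (by have := hM x; have := hgbd x; linarith)
  set E : ℝ := ⨆ x, |f x - g x| with hEdef
  have hE : ∀ x, |f x - g x| ≤ E := fun x => le_ciSup hbdd0 x
  have hEnonneg : 0 ≤ E := le_trans (abs_nonneg _) (hE 0)
  have hshift : ∀ x, |f (x + δ) - f x| ≤ 12 * E := abs_shift_le hf hδ hM hE
  have hg' : ∀ x, HasDerivAt g ((f (x + δ) - f x) / δ) x := steklov_hasDerivAt hf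
  have hderivg : ∀ x, deriv g x = (f (x + δ) - f x) / δ := fun x => (hg' x).deriv
  have hgC1 : ContDiff ℝ 1 g := by
    rw [contDiff_one_iff_deriv]
    refine ⟨fun x => (hg' x).differentiableAt, ?_⟩
    have hfd : deriv g = fun x => (f (x + δ) - f x) / δ := funext hderivg
    rw [hfd]
    exact ((hf.comp (continuous_id.add continuous_const)).sub hf).div_const δ
  have hgdbd : ∀ x, |deriv g x| ≤ 2 * M / δ := by
    intro x
    rw [hderivg x, abs_div, abs_of_pos hδ]
    have h1 : |f (x + δ) - f x| ≤ 2 * M :=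
      le_trans (abs_sub'' _ _) (by have := hM (x + δ); have := hM x; linarith)
    gcongr
  have hbddg1 : BddAbove (Set.range fun x => |g x|) :=
    ⟨M, by rintro r ⟨x, rfl⟩; exact hgbd x⟩
  have hbddg2 : BddAbove (Set.range fun x => |deriv g x|) :=
    ⟨2 * M / δ, by rintro r ⟨x, rfl⟩; exact hgdbd x⟩
  set S : Set ℝ := {c : ℝ | ∃ g : ℝ → ℝ, ContDiff ℝ 1 g ∧
    BddAbove (Set.range fun x => |g x|) ∧
    BddAbove (Set.range fun x => |deriv g x|) ∧
    c = (⨆ x, |f x - g x|) + δ * ⨆ x, |deriv g x|} with hSdef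
  have hK1 : K1 δ f = sInf S := by rw [hSdef]; rfl
  have hElem : ∀ c ∈ S, E ≤ 2 * c ∧ 0 ≤ c := by
    rintro c ⟨p, hpC1, hp1, hp2, rfl⟩
    have hpc : Continuous p := hpC1.continuous
    set C1 : ℝ := ⨆ x, |f x - p x| with hC1def
    set C2 : ℝ := ⨆ x, |deriv p x| with hC2def
    have hbddfp : BddAbove (Set.range fun x => |f x - p x|) := by
      obtain ⟨P, hP⟩ := hp1
      refine ⟨M + P, ?_⟩; rintro r ⟨x, rfl⟩
      have h1 := hM x
      have h2 : |p x| ≤ P := hP ⟨x, rfl⟩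
      exact le_trans (abs_sub'' _ _) (by linarith)
    have hC1p : ∀ x, |f x - p x| ≤ C1 := fun x => le_ciSup hbddfp x
    have hC2p : ∀ x, |deriv p x| ≤ C2 := fun x => le_ciSup hp2 x
    have hC1nonneg : 0 ≤ C1 := le_trans (abs_nonneg _) (hC1p 0)
    have hC2nonneg : 0 ≤ C2 := le_trans (abs_nonneg _) (hC2p 0)
    constructor
    · have hpt : ∀ x, |f x - g x| ≤ 2 * C1 + δ * C2 := by
        intro x
        have h1 : steklov δ (fun y => f y - p y) x = steklov δ f x - steklov δ p x :=
          steklov_sub hf hpc δ x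
        have hsplit : f x - g x
            = ((f x - p x) - steklov δ (fun y => f y - p y) x) + (p x - steklov δ p x) := by
          rw [h1, hgdef]; ring
        have hA1 : |steklov δ (fun y => f y - p y) x| ≤ C1 :=
          steklov_abs_le (hf.sub hpc) hδ hC1p x
        have hA2 : |p x - steklov δ p x| ≤ δ * C2 := by
          have hkey : ∀ t ∈ Set.uIoc (0:ℝ) δ, ‖p x - p (x + t)‖ ≤ C2 * δ := by
            intro t ht
            have hmem := Set.mem_Ioc.mp (by rwa [Set.uIoc_of_le hδ.le] at ht)
            have hlip := (convex_univ : Convex ℝ (Set.univ : Set ℝ)).norm_image_sub_le_of_norm_deriv_le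
              (f := p) (fun y _ => (hpC1.differentiable one_ne_zero) y)
              (fun y _ => by rw [Real.norm_eq_abs]; exact hC2p y)
              (Set.mem_univ (x + t)) (Set.mem_univ x)
            calc ‖p x - p (x + t)‖ ≤ C2 * ‖x - (x + t)‖ := hlip
              _ = C2 * t := by
                  rw [Real.norm_eq_abs, show x - (x + t) = -t by ring, abs_neg,
                    abs_of_pos hmem.1]
              _ ≤ C2 * δ := mul_le_mul_of_nonneg_left hmem.2 hC2nonneg
          have ipc : IntervalIntegrable (fun t : ℝ => p (x + t)) volume 0 δ :=
            (hpc.comp (continuous_const.add continuous_id)).intervalIntegrable _ _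
          have hint : p x - steklov δ p x = (1 / δ) * ∫ t in (0:ℝ)..δ, (p x - p (x + t)) := by
            unfold steklov
            rw [intervalIntegral.integral_sub intervalIntegrable_const ipc,
              intervalIntegral.integral_const]
            simp only [smul_eq_mul, sub_zero]
            field_simp
          have hnorm := intervalIntegral.norm_integral_le_of_norm_le_const
            (a := (0:ℝ)) (b := δ) (C := C2 * δ) (f := fun t => p x - p (x + t)) hkey
          rw [show |δ - 0| = δ by rw [sub_zero, abs_of_pos hδ], Real.norm_eq_abs] at hnorm
          rw [hint, abs_mul, abs_of_pos (by positivity : (0:ℝ) < 1 / δ)]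
          calc 1 / δ * |∫ t in (0:ℝ)..δ, (p x - p (x + t))| ≤ 1 / δ * (C2 * δ * δ) :=
              mul_le_mul_of_nonneg_left hnorm (by positivity)
            _ = δ * C2 := by field_simp
        calc |f x - g x|
            = |((f x - p x) - steklov δ (fun y => f y - p y) x) + (p x - steklov δ p x)| := by
              rw [hsplit]
          _ ≤ |(f x - p x) - steklov δ (fun y => f y - p y) x| + |p x - steklov δ p x| :=
              abs_add_le _ _
          _ ≤ (|f x - p x| + |steklov δ (fun y => f y - p y) x|) + δ * C2 :=
              add_le_add (abs_sub'' _ _) hA2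
          _ ≤ (C1 + C1) + δ * C2 := by
              have := hC1p x
              linarith
          _ = 2 * C1 + δ * C2 := by ring
      have hEle : E ≤ 2 * C1 + δ * C2 := ciSup_le hpt
      have hδC2 : 0 ≤ δ * C2 := mul_nonneg hδ.le hC2nonneg
      linarith
    · exact add_nonneg hC1nonneg (mul_nonneg hδ.le hC2nonneg)
  have hmem : (E + δ * ⨆ x, |deriv g x|) ∈ S := ⟨g, hgC1, hbddg1, hbddg2, rfl⟩
  have hSne : S.Nonempty := ⟨_, hmem⟩
  have hSbdd : BddBelow S := ⟨0, fun c hc => (hElem c hc).2⟩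
  have h2 : E / 2 ≤ sInf S := le_csInf hSne (fun c hc => by have := (hElem c hc).1; linarith)
  have hsupd : (⨆ x, |deriv g x|) ≤ 12 * E / δ := by
    apply ciSup_le
    intro x
    rw [hderivg x, abs_div, abs_of_pos hδ]
    gcongr
    exact hshift x
  have hK1le : sInf S ≤ E + δ * ⨆ x, |deriv g x| := csInf_le hSbdd hmem
  have h13 : sInf S ≤ 13 * E := by
    have hδs : δ * (⨆ x, |deriv g x|) ≤ 12 * E := by
      calc δ * (⨆ x, |deriv g x|) ≤ δ * (12 * E / δ) :=
          mul_le_mul_of_nonneg_left hsupd hδ.le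
        _ = 12 * E := by field_simp
    linarith
  constructor
  · rw [hK1]
    calc (1 / 36) * sInf S ≤ (1 / 36) * (13 * E) := by linarith
      _ ≤ E := by linarith
  · rw [hK1]; linarith
end

section
/- If f : ℝ → ℝ is bounded continuous and 0 < h ≤ δ, then ‖f - T_h f‖ ≤ 72 ‖f - T_δ f‖ in the sup norm. -/
namespace SteklovAux

/-- Primitive of `f`. -/
noncomputable def primF (f : ℝ → ℝ) : ℝ → ℝ := fun y => ∫ t in (0:ℝ)..y, f t

variable {f : ℝ → ℝ}

lemma contComp (hf : Continuous f) (y : ℝ) : Continuous fun t : ℝ => f (y + t) :=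
  hf.comp (continuous_const.add continuous_id)

lemma intComp (hf : Continuous f) (y c : ℝ) :
    (∫ t in (0:ℝ)..c, f (y + t)) = primF f (y + c) - primF f y := by
  have h0 : (∫ t in (0:ℝ)..c, f (y + t)) = ∫ x in (y + 0)..(y + c), f x :=
    intervalIntegral.integral_comp_add_left f y
  have h1 : IntervalIntegrable f MeasureTheory.volume 0 y := hf.intervalIntegrable _ _
  have h2 : IntervalIntegrable f MeasureTheory.volume y (y + c) := hf.intervalIntegrable _ _
  have h3 := intervalIntegral.integral_add_adjacent_intervals h1 h2
  rw [h0, add_zero]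
  unfold primF
  linarith [h3]

lemma primF_hasDeriv (hf : Continuous f) (y : ℝ) : HasDerivAt (primF f) (f y) y :=
  intervalIntegral.integral_hasDerivAt_right (hf.intervalIntegrable _ _)
    (hf.stronglyMeasurableAtFilter _ _) hf.continuousAt

lemma primF_cont (hf : Continuous f) : Continuous (primF f) :=
  continuous_iff_continuousAt.mpr fun y => (primF_hasDeriv hf y).continuousAt

/-- Integration by parts identity. -/
lemma parts (hf : Continuous f) (y δ : ℝ) :
    (∫ t in (0:ℝ)..δ, (δ - t) * f (y + t)) =
      ∫ t in (0:ℝ)..δ, (primF f (y + t) - primF f y) := by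
  have hu : ∀ t ∈ Set.uIcc (0:ℝ) δ, HasDerivAt (fun s : ℝ => δ - s) (-1 : ℝ) t := by
    intro t _
    simpa using (hasDerivAt_id t).const_sub δ
  have hv : ∀ t ∈ Set.uIcc (0:ℝ) δ,
      HasDerivAt (fun s : ℝ => primF f (y + s) - primF f y) (f (y + t)) t := by
    intro t _
    have h1 : HasDerivAt (fun s : ℝ => y + s) 1 t := by
      simpa using (hasDerivAt_id t).const_add y
    have h2 := (primF_hasDeriv hf (y + t)).comp t h1
    simpa using h2.sub_const (primF f y)
  have hu' : IntervalIntegrable (fun _ : ℝ => (-1:ℝ)) MeasureTheory.volume 0 δ :=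
    intervalIntegrable_const
  have hv' : IntervalIntegrable (fun t => f (y + t)) MeasureTheory.volume 0 δ :=
    (contComp hf y).intervalIntegrable _ _
  have H := intervalIntegral.integral_mul_deriv_eq_deriv_mul hu hv hu' hv'
  have hneg : (∫ t in (0:ℝ)..δ, (-1:ℝ) * (primF f (y + t) - primF f y)) =
      -∫ t in (0:ℝ)..δ, (primF f (y + t) - primF f y) := by
    rw [← intervalIntegral.integral_neg]
    congr 1
    funext t
    ring
  rw [hneg] at H
  simp only [sub_self, mul_zero, zero_mul, add_zero, sub_zero, zero_sub, sub_neg_eq_add,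
    zero_add] at H
  linarith [H]

end SteklovAux

theorem diff_monotone_const (f : ℝ → ℝ) (hf : Continuous f)
    (hb : BddAbove (Set.range fun x => |f x|)) (h δ : ℝ) (hh : 0 < h) (hhδ : h ≤ δ) :
    (⨆ x, |f x - steklov h f x|) ≤ 72 * ⨆ x, |f x - steklov δ f x| := by
  classical
  obtain ⟨M, hMub⟩ := hb
  have hM : ∀ x, |f x| ≤ M := fun x => hMub ⟨x, rfl⟩
  have hδ : (0:ℝ) < δ := lt_of_lt_of_le hh hhδ
  have hδ0 : δ ≠ 0 := ne_of_gt hδ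
  have hh0 : h ≠ 0 := ne_of_gt hh
  -- notation
  set F : ℝ → ℝ := SteklovAux.primF f with hFdef
  have hSek : ∀ c x : ℝ, steklov c f x = (1/c) * (F (x + c) - F x) := by
    intro c x
    unfold steklov
    rw [SteklovAux.intComp hf]
  -- bound on steklov values
  have hSbound : ∀ x, |steklov δ f x| ≤ M := by
    intro x
    unfold steklov
    rw [abs_mul]
    have hb1 : ∀ t ∈ Set.uIoc (0:ℝ) δ, ‖f (x + t)‖ ≤ M := fun t _ => hM (x + t)
    have hb2 := intervalIntegral.norm_integral_le_of_norm_le_const hb1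
    rw [Real.norm_eq_abs] at hb2
    have : |(1:ℝ)/δ| = 1/δ := abs_of_pos (by positivity)
    rw [this]
    calc (1/δ) * |∫ t in (0:ℝ)..δ, f (x + t)| ≤ (1/δ) * (M * |δ - 0|) := by
          apply mul_le_mul_of_nonneg_left hb2 (by positivity)
      _ = M := by
          rw [sub_zero, abs_of_pos hδ]
          field_simp
  have hM0 : (0:ℝ) ≤ M := le_trans (abs_nonneg _) (hM 0)
  -- v and ε
  have hvb : ∀ x, |f x - steklov δ f x| ≤ M + M := by
    intro x
    calc |f x - steklov δ f x| ≤ |f x| + |steklov δ f x| := abs_sub _ _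
      _ ≤ M + M := add_le_add (hM x) (hSbound x)
  have hbddv : BddAbove (Set.range fun x => |f x - steklov δ f x|) := by
    refine ⟨M + M, ?_⟩
    rintro _ ⟨x, rfl⟩
    exact hvb x
  set ε : ℝ := ⨆ x, |f x - steklov δ f x| with hεdef
  have hεx : ∀ x, |f x - steklov δ f x| ≤ ε := fun x => le_ciSup hbddv x
  have hε0 : (0:ℝ) ≤ ε := le_trans (abs_nonneg _) (hεx 0)
  -- P
  have hDb : ∀ x, |f (x + δ) - f x| ≤ M + M := by
    intro x
    calc |f (x + δ) - f x| ≤ |f (x + δ)| + |f x| := abs_sub _ _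
      _ ≤ M + M := add_le_add (hM _) (hM x)
  have hbddD : BddAbove (Set.range fun x => |f (x + δ) - f x|) := by
    refine ⟨M + M, ?_⟩
    rintro _ ⟨x, rfl⟩
    exact hDb x
  set P : ℝ := ⨆ x, |f (x + δ) - f x| with hPdef
  have hPx : ∀ x, |f (x + δ) - f x| ≤ P := fun x => le_ciSup hbddD x
  have hP0 : (0:ℝ) ≤ P := le_trans (abs_nonneg _) (hPx 0)
  -- continuity helpers
  have hcontg : ∀ x : ℝ, Continuous fun t : ℝ => f (x + δ + t) - f (x + t) := fun x =>
    (SteklovAux.contComp hf _).sub (SteklovAux.contComp hf x)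
  have hFc : Continuous F := SteklovAux.primF_cont hf
  have hFc1 : ∀ y : ℝ, Continuous fun t : ℝ => F (y + t) :=
    fun y => hFc.comp (continuous_const.add continuous_id)
  -- key identity: ∫ (δ-t) * (f(x+δ+t) - f(x+t)) dt = -(δ * ∫ (f(x+t) - steklov δ f (x+t)) dt)
  have hIdent : ∀ x : ℝ,
      (∫ t in (0:ℝ)..δ, (δ - t) * (f (x + δ + t) - f (x + t))) =
        -(δ * ∫ t in (0:ℝ)..δ, (f (x + t) - steklov δ f (x + t))) := by
    intro x
    have i1 : IntervalIntegrable (fun t => (δ - t) * f (x + δ + t)) MeasureTheory.volume 0 δ :=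
      ((continuous_const.sub continuous_id).mul (SteklovAux.contComp hf _)).intervalIntegrable _ _
    have i2 : IntervalIntegrable (fun t => (δ - t) * f (x + t)) MeasureTheory.volume 0 δ :=
      ((continuous_const.sub continuous_id).mul (SteklovAux.contComp hf x)).intervalIntegrable _ _
    have e1 : (∫ t in (0:ℝ)..δ, (δ - t) * (f (x + δ + t) - f (x + t))) =
        (∫ t in (0:ℝ)..δ, (δ - t) * f (x + δ + t)) -
          ∫ t in (0:ℝ)..δ, (δ - t) * f (x + t) := by
      rw [← intervalIntegral.integral_sub i1 i2]
      congr 1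
      funext t
      ring
    have e2 := SteklovAux.parts hf (x + δ) δ
    have e3 := SteklovAux.parts hf x δ
    -- expand the parts integrals
    have j1 : IntervalIntegrable (fun t => F (x + δ + t)) MeasureTheory.volume 0 δ :=
      (hFc1 _).intervalIntegrable _ _
    have j2 : IntervalIntegrable (fun t => F (x + t)) MeasureTheory.volume 0 δ :=
      (hFc1 x).intervalIntegrable _ _
    have e4 : (∫ t in (0:ℝ)..δ, (F (x + δ + t) - F (x + δ))) =
        (∫ t in (0:ℝ)..δ, F (x + δ + t)) - δ * F (x + δ) := by
      rw [intervalIntegral.integral_sub j1 intervalIntegrable_const,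
        intervalIntegral.integral_const]
      simp [smul_eq_mul]
    have e5 : (∫ t in (0:ℝ)..δ, (F (x + t) - F x)) =
        (∫ t in (0:ℝ)..δ, F (x + t)) - δ * F x := by
      rw [intervalIntegral.integral_sub j2 intervalIntegrable_const,
        intervalIntegral.integral_const]
      simp [smul_eq_mul]
    -- RHS expansion
    have iS : IntervalIntegrable (fun t => steklov δ f (x + t)) MeasureTheory.volume 0 δ := by
      have : (fun t : ℝ => steklov δ f (x + t)) =
          fun t : ℝ => (1/δ) * (F (x + t + δ) - F (x + t)) := by
        funext t
        rw [hSek δ (x + t)]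
      rw [this]
      apply Continuous.intervalIntegrable
      apply continuous_const.mul
      apply Continuous.sub _ (hFc1 x)
      have : (fun t : ℝ => F (x + t + δ)) = fun t : ℝ => F (x + δ + t) := by
        funext t
        congr 1
        ring
      rw [this]
      exact hFc1 _
    have ifx : IntervalIntegrable (fun t => f (x + t)) MeasureTheory.volume 0 δ :=
      (SteklovAux.contComp hf x).intervalIntegrable _ _
    have e6 : (∫ t in (0:ℝ)..δ, (f (x + t) - steklov δ f (x + t))) =
        (F (x + δ) - F x) - (1/δ) * ((∫ t in (0:ℝ)..δ, F (x + δ + t)) -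
          ∫ t in (0:ℝ)..δ, F (x + t)) := by
      rw [intervalIntegral.integral_sub ifx iS, SteklovAux.intComp hf x δ]
      congr 1
      have : (fun t : ℝ => steklov δ f (x + t)) =
          fun t : ℝ => (1/δ) * (F (x + δ + t) - F (x + t)) := by
        funext t
        rw [hSek δ (x + t)]
        congr 2
        ring
      rw [this, intervalIntegral.integral_const_mul,
        intervalIntegral.integral_sub j1 j2]
    rw [e1, e2, e3, e4, e5, e6]
    field_simp
    ring
  -- bound: |∫ (f(x+t) - steklov δ f (x+t)) dt| ≤ ε * δ
  have hvint : ∀ x : ℝ, |∫ t in (0:ℝ)..δ, (f (x + t) - steklov δ f (x + t))| ≤ ε * δ := by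
    intro x
    have hb1 : ∀ t ∈ Set.uIoc (0:ℝ) δ, ‖f (x + t) - steklov δ f (x + t)‖ ≤ ε :=
      fun t _ => hεx (x + t)
    have := intervalIntegral.norm_integral_le_of_norm_le_const hb1
    rw [Real.norm_eq_abs, sub_zero, abs_of_pos hδ] at this
    exact this
  -- ∫ g = δ * (steklov δ f (x+δ) - steklov δ f x)
  have hGint : ∀ x : ℝ, (∫ t in (0:ℝ)..δ, (f (x + δ + t) - f (x + t))) =
      δ * (steklov δ f (x + δ) - steklov δ f x) := by
    intro x
    rw [intervalIntegral.integral_sub ((SteklovAux.contComp hf _).intervalIntegrable _ _)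
      ((SteklovAux.contComp hf x).intervalIntegrable _ _),
      SteklovAux.intComp hf (x + δ) δ, SteklovAux.intComp hf x δ,
      hSek δ (x + δ), hSek δ x]
    field_simp
    rfl
  -- core estimate: ∀ x, |D x| ≤ 3ε + P/2
  have hcore : ∀ x : ℝ, |f (x + δ) - f x| ≤ 3 * ε + P / 2 := by
    intro x
    have iwg : IntervalIntegrable (fun t => (δ - t) * (f (x + δ + t) - f (x + t)))
        MeasureTheory.volume 0 δ :=
      ((continuous_const.sub continuous_id).mul (hcontg x)).intervalIntegrable _ _
    have ig : IntervalIntegrable (fun t => f (x + δ + t) - f (x + t))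
        MeasureTheory.volume 0 δ := (hcontg x).intervalIntegrable _ _
    -- |I| ≤ δ * (ε * δ)
    have hIabs : |∫ t in (0:ℝ)..δ, (δ - t) * (f (x + δ + t) - f (x + t))| ≤ δ * (ε * δ) := by
      rw [hIdent x, abs_neg, abs_mul, abs_of_pos hδ]
      exact mul_le_mul_of_nonneg_left (hvint x) hδ.le
    -- pointwise bounds
    have hptP : ∀ t, |f (x + δ + t) - f (x + t)| ≤ P := by
      intro t
      have := hPx (x + t)
      have e : x + t + δ = x + δ + t := by ring
      rwa [e] at this
    have hlow : (∫ t in (0:ℝ)..δ, (δ * (f (x + δ + t) - f (x + t)) - t * P)) ≤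
        ∫ t in (0:ℝ)..δ, (δ - t) * (f (x + δ + t) - f (x + t)) := by
      apply intervalIntegral.integral_mono_on hδ.le _ iwg
      · intro t ht
        have ht0 : 0 ≤ t := ht.1
        have habs := hptP t
        have h1 : t * (f (x + δ + t) - f (x + t)) ≤ t * P :=
          mul_le_mul_of_nonneg_left (le_trans (le_abs_self _) habs) ht0
        nlinarith [h1]
      · exact ((continuous_const.mul (hcontg x)).sub
          (continuous_id.mul continuous_const)).intervalIntegrable _ _
    have hhigh : (∫ t in (0:ℝ)..δ, (δ - t) * (f (x + δ + t) - f (x + t))) ≤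
        ∫ t in (0:ℝ)..δ, (δ * (f (x + δ + t) - f (x + t)) + t * P) := by
      apply intervalIntegral.integral_mono_on hδ.le iwg
      · exact ((continuous_const.mul (hcontg x)).add
          (continuous_id.mul continuous_const)).intervalIntegrable _ _
      · intro t ht
        have ht0 : 0 ≤ t := ht.1
        have habs := hptP t
        have h1 : t * (-P) ≤ t * (f (x + δ + t) - f (x + t)) :=
          mul_le_mul_of_nonneg_left (neg_le_of_abs_le habs) ht0
        nlinarith [h1]
    -- compute the comparison integrals
    have iid : IntervalIntegrable (fun t : ℝ => t * P) MeasureTheory.volume 0 δ := by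
      apply Continuous.intervalIntegrable
      exact continuous_id.mul continuous_const
    have icg : IntervalIntegrable (fun t : ℝ => δ * (f (x + δ + t) - f (x + t)))
        MeasureTheory.volume 0 δ := (continuous_const.mul (hcontg x)).intervalIntegrable _ _
    have hid : (∫ t in (0:ℝ)..δ, t * P) = δ^2/2 * P := by
      rw [intervalIntegral.integral_mul_const, integral_id]
      ring
    have hcomp1 : (∫ t in (0:ℝ)..δ, (δ * (f (x + δ + t) - f (x + t)) - t * P)) =
        δ * (δ * (steklov δ f (x + δ) - steklov δ f x)) - δ^2/2 * P := by
      rw [intervalIntegral.integral_sub icg iid, intervalIntegral.integral_const_mul,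
        hGint x, hid]
    have hcomp2 : (∫ t in (0:ℝ)..δ, (δ * (f (x + δ + t) - f (x + t)) + t * P)) =
        δ * (δ * (steklov δ f (x + δ) - steklov δ f x)) + δ^2/2 * P := by
      rw [intervalIntegral.integral_add icg iid, intervalIntegral.integral_const_mul,
        hGint x, hid]
    -- relate steklov difference to D and v
    have hrel : steklov δ f (x + δ) - steklov δ f x =
        (f (x + δ) - f x) + (f x - steklov δ f x) - (f (x + δ) - steklov δ f (x + δ)) := by
      ring
    have hvx := hεx x
    have hvx' := hεx (x + δ)
    have hSd_low : f (x + δ) - f x - 2 * ε ≤ steklov δ f (x + δ) - steklov δ f x := by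
      rw [hrel]
      have := abs_le.mp hvx
      have := abs_le.mp hvx'
      linarith [(abs_le.mp hvx).1, (abs_le.mp hvx').2]
    have hSd_high : steklov δ f (x + δ) - steklov δ f x ≤ f (x + δ) - f x + 2 * ε := by
      rw [hrel]
      linarith [(abs_le.mp hvx).2, (abs_le.mp hvx').1]
    have habsI := abs_le.mp hIabs
    have hd2 : (0:ℝ) < δ^2 := by positivity
    rw [hcomp1] at hlow
    rw [hcomp2] at hhigh
    rw [abs_le]
    constructor
    · nlinarith [hhigh, habsI.1, hSd_high, hd2]
    · nlinarith [hlow, habsI.2, hSd_low, hd2]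
  have hP6 : P ≤ 6 * ε := by
    have : P ≤ 3 * ε + P / 2 := ciSup_le hcore
    linarith
  -- assembly: pointwise bound for the h-Steklov error
  have hmain : ∀ x : ℝ, |f x - steklov h f x| ≤ 2 * ε + P := by
    intro x
    have hdecomp : f x - steklov h f x =
        (1/h) * ∫ t in (0:ℝ)..h, (f x - f (x + t)) := by
      rw [intervalIntegral.integral_sub intervalIntegrable_const
        ((SteklovAux.contComp hf x).intervalIntegrable _ _),
        intervalIntegral.integral_const]
      unfold steklov
      field_simp
      ring
    -- pointwise bound on the integrand
    have hpt : ∀ t ∈ Set.uIoc (0:ℝ) h, ‖f x - f (x + t)‖ ≤ 2 * ε + P := by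
      intro t ht
      rw [Set.uIoc_of_le hh.le] at ht
      have ht0 : 0 < t := ht.1
      have hth : t ≤ h := ht.2
      -- steklov difference bound: |steklov δ f (x+t) - steklov δ f x| ≤ P
      have hSdiff : |steklov δ f (x + t) - steklov δ f x| ≤ P := by
        have hJ : steklov δ f (x + t) - steklov δ f x =
            (1/δ) * ∫ s in (0:ℝ)..t, (f (x + s + δ) - f (x + s)) := by
          have hJ1 : (∫ s in (0:ℝ)..t, (f (x + s + δ) - f (x + s))) =
              (F (x + δ + t) - F (x + δ)) - (F (x + t) - F x) := by
            rw [intervalIntegral.integral_sub _ ((SteklovAux.contComp hf x).intervalIntegrable _ _)]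
            · have : (fun s : ℝ => f (x + s + δ)) = fun s : ℝ => f (x + δ + s) := by
                funext s
                congr 1
                ring
              rw [this, SteklovAux.intComp hf (x + δ) t, SteklovAux.intComp hf x t]
            · have : (fun s : ℝ => f (x + s + δ)) = fun s : ℝ => f (x + δ + s) := by
                funext s
                congr 1
                ring
              rw [this]
              exact (SteklovAux.contComp hf _).intervalIntegrable _ _
          rw [hJ1, hSek δ (x + t), hSek δ x]
          have e1 : x + t + δ = x + δ + t := by ring
          rw [e1]
          field_simp
          ring
        rw [hJ, abs_mul]
        have h1δ : |(1:ℝ)/δ| = 1/δ := abs_of_pos (by positivity)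
        rw [h1δ]
        have hb1 : ∀ s ∈ Set.uIoc (0:ℝ) t, ‖f (x + s + δ) - f (x + s)‖ ≤ P :=
          fun s _ => hPx (x + s)
        have hb2 := intervalIntegral.norm_integral_le_of_norm_le_const hb1
        rw [Real.norm_eq_abs, sub_zero] at hb2
        have habs_t : |t| = t := abs_of_pos ht0
        rw [habs_t] at hb2
        calc (1/δ) * |∫ s in (0:ℝ)..t, (f (x + s + δ) - f (x + s))| ≤ (1/δ) * (P * t) :=
              mul_le_mul_of_nonneg_left hb2 (by positivity)
          _ ≤ (1/δ) * (P * δ) := by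
              apply mul_le_mul_of_nonneg_left _ (by positivity)
              exact mul_le_mul_of_nonneg_left (le_trans hth hhδ) hP0
          _ = P := by field_simp
      have hdec : f x - f (x + t) =
          ((f x - steklov δ f x) - (f (x + t) - steklov δ f (x + t))) +
            (steklov δ f x - steklov δ f (x + t)) := by
        ring
      have hS2 : |steklov δ f x - steklov δ f (x + t)| ≤ P := by
        rw [abs_sub_comm]
        exact hSdiff
      rw [Real.norm_eq_abs, hdec]
      have t1 := abs_add_le ((f x - steklov δ f x) - (f (x + t) - steklov δ f (x + t)))
        (steklov δ f x - steklov δ f (x + t))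
      have t2 := abs_sub (f x - steklov δ f x) (f (x + t) - steklov δ f (x + t))
      have t3 := hεx x
      have t4 := hεx (x + t)
      linarith [t1, t2, t3, t4, hS2]
    have hb2 := intervalIntegral.norm_integral_le_of_norm_le_const hpt
    rw [Real.norm_eq_abs, sub_zero, abs_of_pos hh] at hb2
    rw [hdecomp, abs_mul]
    have h1h : |(1:ℝ)/h| = 1/h := abs_of_pos (by positivity)
    rw [h1h]
    calc (1/h) * |∫ t in (0:ℝ)..h, (f x - f (x + t))| ≤ (1/h) * ((2 * ε + P) * h) :=
          mul_le_mul_of_nonneg_left hb2 (by positivity)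
      _ = 2 * ε + P := by field_simp
  -- conclude
  apply ciSup_le
  intro x
  calc |f x - steklov h f x| ≤ 2 * ε + P := hmain x
    _ ≤ 2 * ε + 6 * ε := by linarith
    _ ≤ 72 * ε := by linarith
end

section
/- Let p : ℝ → [1, ∞) be measurable with 1 ≤ ess inf p and ess sup p =: p⁺ < ∞, and suppose 1/p is log-Hölder continuous, i.e. |1/p(x) - 1/p(y)| ≤ c / log(e + 1/|x-y|) for all x ≠ y, and there is p_∞ with |1/p(x) - 1/p_∞| ≤ c / log(e + |x|). Then the Steklov-type operators U_τ f(x) = ∫_{-1/2}^{1/2} f(x + τ + t) dt are uniformly bounded on the variable-exponent Lebesgue space L^{p(·)}(ℝ): there is a constant C depending only on p⁺ and c such that ‖U_τ f‖_{p(·)} ≤ C ‖f‖_{p(·)} for all τ ∈ ℝ and all f ∈ L^{p(·)}(ℝ). -/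
open MeasureTheory ENNReal

/-- The modular `∫ |f(y)/λ|^{p(y)} dy` of variable-exponent Lebesgue theory. -/
noncomputable def vModular (p : ℝ → ℝ) (f : ℝ → ℝ) (lam : ℝ) : ℝ≥0∞ :=
  ∫⁻ y, ENNReal.ofReal (|f y| / lam) ^ (p y)

/-- The Luxemburg norm of `f` in the variable-exponent Lebesgue space `L^{p(·)}(ℝ)`. -/
noncomputable def luxNorm (p : ℝ → ℝ) (f : ℝ → ℝ) : ℝ :=
  sInf {η : ℝ | 0 < η ∧ vModular p f η ≤ 1}

/-- Membership in `L^{p(·)}(ℝ)`: the modular is finite for some `λ > 0`. -/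
def MemVLp (p : ℝ → ℝ) (f : ℝ → ℝ) : Prop :=
  Measurable f ∧ ∃ lam : ℝ, 0 < lam ∧ vModular p f lam < ⊤

/-- The Steklov-type translation operator `U_τ f(x) = ∫_{-1/2}^{1/2} f(x+τ+t) dt`. -/
noncomputable def Uop (τ : ℝ) (f : ℝ → ℝ) : ℝ → ℝ :=
  fun x => ∫ t in (-(1:ℝ)/2)..(1/2), f (x + τ + t)


lemma add_rpow_le2 (a b : ℝ≥0∞) {r : ℝ} (hr : 0 ≤ r) :
    (a + b) ^ r ≤ 2 ^ r * (a ^ r + b ^ r) := by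
  have h1 : a + b ≤ 2 * max a b := by
    rcases le_total a b with h | h
    · calc a + b ≤ b + b := by gcongr
        _ = 2 * b := (two_mul b).symm
        _ ≤ 2 * max a b := by gcongr; exact le_max_right a b
    · calc a + b ≤ a + a := by gcongr
        _ = 2 * a := (two_mul a).symm
        _ ≤ 2 * max a b := by gcongr; exact le_max_left a b
  calc (a + b) ^ r ≤ (2 * max a b) ^ r := ENNReal.rpow_le_rpow h1 hr
    _ = 2 ^ r * (max a b) ^ r := ENNReal.mul_rpow_of_nonneg _ _ hr
    _ ≤ 2 ^ r * (a ^ r + b ^ r) := by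
        gcongr
        rcases le_total a b with h | h
        · rw [max_eq_right h]; exact le_add_self
        · rw [max_eq_left h]; exact le_self_add

lemma keyExp {C₁ : ℝ} (hC₁ : 0 ≤ C₁) {a : ℝ≥0∞} (ha : a ≤ 1) {r s M : ℝ}
    (hr : 1 ≤ r) (hs : 1 ≤ s) (hM : Real.exp 1 ≤ M)
    (hrs : |r - s| ≤ C₁ / Real.log M) :
    a ^ r ≤ ENNReal.ofReal (Real.exp (2 * C₁)) * a ^ s + ENNReal.ofReal (M ^ (-2 : ℝ)) := by
  have hM0 : (0:ℝ) < M := lt_of_lt_of_le (Real.exp_pos 1) hM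
  have hlogM : (1:ℝ) ≤ Real.log M := by
    calc (1:ℝ) = Real.log (Real.exp 1) := (Real.log_exp 1).symm
      _ ≤ Real.log M := Real.log_le_log (Real.exp_pos 1) hM
  have hlogM0 : (0:ℝ) < Real.log M := lt_of_lt_of_le one_pos hlogM
  have hMneg : (0:ℝ) < M ^ (-2:ℝ) := Real.rpow_pos_of_pos hM0 _
  have hE1 : (1:ℝ) ≤ Real.exp (2 * C₁) := Real.one_le_exp (by linarith)
  rcases le_or_gt a (ENNReal.ofReal (M ^ (-2:ℝ))) with hcase | hcase
  · have : a ^ r ≤ a ^ (1:ℝ) := ENNReal.rpow_le_rpow_of_exponent_ge ha hr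
    rw [ENNReal.rpow_one] at this
    exact le_add_left (this.trans hcase)
  · have ha0 : a ≠ 0 := by
      intro h; rw [h] at hcase
      exact (not_lt_of_ge zero_le) hcase
    have hatop : a ≠ ⊤ := ne_top_of_le_ne_top one_ne_top ha
    have hsplit : a ^ r = a ^ (r - s) * a ^ s := by
      rw [← ENNReal.rpow_add _ _ ha0 hatop, sub_add_cancel]
    rw [hsplit]
    have hkey : a ^ (r - s) ≤ ENNReal.ofReal (Real.exp (2 * C₁)) := by
      rcases le_or_gt 0 (r - s) with hd | hd
      · calc a ^ (r - s) ≤ 1 := ENNReal.rpow_le_one ha hd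
          _ ≤ ENNReal.ofReal (Real.exp (2 * C₁)) := by
              rw [← ENNReal.ofReal_one]; exact ENNReal.ofReal_le_ofReal hE1
      · have hneg : r - s = -(s - r) := by ring
        have h1 : a ^ (r - s) ≤ (ENNReal.ofReal (M ^ (-2:ℝ))) ^ (r - s) := by
          rw [hneg, ENNReal.rpow_neg a, ENNReal.rpow_neg _]
          exact ENNReal.inv_le_inv.2
            (ENNReal.rpow_le_rpow hcase.le (by linarith))
        have h2 : (ENNReal.ofReal (M ^ (-2:ℝ))) ^ (r - s) = ENNReal.ofReal ((M ^ (-2:ℝ)) ^ (r-s)) :=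
          ENNReal.ofReal_rpow_of_pos hMneg
        have h3 : (M ^ (-2:ℝ)) ^ (r - s) = M ^ ((-2) * (r - s)) :=
          (Real.rpow_mul hM0.le _ _).symm
        have h4 : M ^ ((-2) * (r - s)) ≤ Real.exp (2 * C₁) := by
          rw [Real.rpow_def_of_pos hM0]
          apply Real.exp_le_exp.2
          have habs : |r - s| = s - r := by rw [abs_of_neg hd]; ring
          have h5 : s - r ≤ C₁ / Real.log M := habs ▸ hrs
          have h6 : (s - r) * Real.log M ≤ C₁ := by
            rw [← le_div_iff₀ hlogM0]; exact h5
          calc Real.log M * (-2 * (r - s)) = 2 * ((s - r) * Real.log M) := by ring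
            _ ≤ 2 * C₁ := by linarith
        calc a ^ (r - s) ≤ ENNReal.ofReal ((M ^ (-2:ℝ)) ^ (r-s)) := h2 ▸ h1
          _ ≤ ENNReal.ofReal (Real.exp (2 * C₁)) := by
              apply ENNReal.ofReal_le_ofReal; rw [h3]; exact h4
    calc a ^ (r - s) * a ^ s ≤ ENNReal.ofReal (Real.exp (2 * C₁)) * a ^ s := by gcongr
      _ ≤ _ := le_self_add

lemma jensen_unit {q : ℝ} (hq : 1 < q) (ν : Measure ℝ) [IsProbabilityMeasure ν]
    (g : ℝ → ℝ≥0∞) (hg : AEMeasurable g ν) :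
    (∫⁻ y, g y ∂ν) ^ q ≤ ∫⁻ y, (g y) ^ q ∂ν := by
  have hq0 : q ≠ 0 := by positivity
  have hconj : q.HolderConjugate q.conjExponent := Real.HolderConjugate.conjExponent hq
  have hH := ENNReal.lintegral_mul_le_Lp_mul_Lq ν hconj hg (aemeasurable_const (b := (1:ℝ≥0∞)))
  simp only [Pi.mul_apply, mul_one, ENNReal.one_rpow, lintegral_const, measure_univ,
    one_mul] at hH
  have hH2 : ∫⁻ y, g y ∂ν ≤ (∫⁻ y, g y ^ q ∂ν) ^ (1 / q) := hH
  calc (∫⁻ y, g y ∂ν) ^ q ≤ ((∫⁻ y, g y ^ q ∂ν) ^ (1/q)) ^ q :=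
        ENNReal.rpow_le_rpow hH2 (by positivity)
    _ = (∫⁻ y, g y ^ q ∂ν) ^ ((1/q) * q) := by rw [← ENNReal.rpow_mul]
    _ = _ := by rw [one_div_mul_cancel hq0, ENNReal.rpow_one]

lemma fubini_strip (τ : ℝ) (h : ℝ → ℝ≥0∞) (hh : Measurable h) :
    ∫⁻ x, ∫⁻ y in Set.Ioc (x + τ - 1/2) (x + τ + 1/2), h y = ∫⁻ y, h y := by
  have hsetmeas : MeasurableSet {z : ℝ × ℝ | z.1 + τ - 1/2 < z.2 ∧ z.2 ≤ z.1 + τ + 1/2} := by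
    apply MeasurableSet.inter
    · exact measurableSet_lt (by measurability) measurable_snd
    · exact measurableSet_le measurable_snd (by measurability)
  have hF : Measurable (Function.uncurry fun x y =>
      (Set.Ioc (x + τ - 1/2) (x + τ + 1/2)).indicator h y) := by
    have : (Function.uncurry fun x y => (Set.Ioc (x + τ - 1/2) (x + τ + 1/2)).indicator h y)
        = {z : ℝ × ℝ | z.1 + τ - 1/2 < z.2 ∧ z.2 ≤ z.1 + τ + 1/2}.indicator (fun z => h z.2) := by
      funext z
      simp only [Function.uncurry, Set.indicator, Set.mem_Ioc, Set.mem_setOf_eq]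
    rw [this]
    exact (hh.comp measurable_snd).indicator hsetmeas
  calc ∫⁻ x, ∫⁻ y in Set.Ioc (x + τ - 1/2) (x + τ + 1/2), h y
      = ∫⁻ x, ∫⁻ y, (Set.Ioc (x + τ - 1/2) (x + τ + 1/2)).indicator h y := by
        congr 1; funext x; rw [lintegral_indicator measurableSet_Ioc]
    _ = ∫⁻ y, ∫⁻ x, (Set.Ioc (x + τ - 1/2) (x + τ + 1/2)).indicator h y := by
        exact lintegral_lintegral_swap hF.aemeasurable
    _ = ∫⁻ y, h y := by
        congr 1; funext y
        have heq : ∀ x : ℝ, (Set.Ioc (x + τ - 1/2) (x + τ + 1/2)).indicator h y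
            = (Set.Ico (y - τ - 1/2) (y - τ + 1/2)).indicator (fun _ => h y) x := by
          intro x
          have hiff : (x + τ - 1/2 < y ∧ y ≤ x + τ + 1/2) ↔
              (y - τ - 1/2 ≤ x ∧ x < y - τ + 1/2) := by
            constructor <;> rintro ⟨h1, h2⟩ <;> exact ⟨by linarith, by linarith⟩
          simp only [Set.indicator, Set.mem_Ioc, Set.mem_Ico, hiff]
        simp_rw [heq]
        rw [lintegral_indicator measurableSet_Ico, setLIntegral_const, Real.volume_Ico]
        norm_num


lemma Uop_eq (τ : ℝ) (f : ℝ → ℝ) (x : ℝ) :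
    Uop τ f x = ∫ y in Set.Ioc (x + τ - 1/2) (x + τ + 1/2), f y := by
  have h1 : Uop τ f x = ∫ t in (x + τ) + (-(1:ℝ)/2)..((x + τ) + 1/2), f t := by
    rw [Uop, ← intervalIntegral.integral_comp_add_left f (x + τ)]
  rw [h1]
  have e1 : (x + τ) + (-(1:ℝ)/2) = x + τ - 1/2 := by ring
  have e2 : (x + τ) + (1:ℝ)/2 = x + τ + 1/2 := by ring
  rw [e1, e2, intervalIntegral.integral_of_le (by linarith)]

lemma Uop_bound (τ : ℝ) (f : ℝ → ℝ) (x : ℝ) :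
    ENNReal.ofReal |Uop τ f x| ≤ ∫⁻ y in Set.Ioc (x + τ - 1/2) (x + τ + 1/2),
      ENNReal.ofReal |f y| := by
  rw [Uop_eq]
  calc ENNReal.ofReal |∫ y in Set.Ioc (x + τ - 1/2) (x + τ + 1/2), f y|
      = (‖∫ y in Set.Ioc (x + τ - 1/2) (x + τ + 1/2), f y‖₊ : ℝ≥0∞) :=
        (Real.enorm_eq_ofReal_abs _).symm
    _ ≤ ∫⁻ y in Set.Ioc (x + τ - 1/2) (x + τ + 1/2), (‖f y‖₊ : ℝ≥0∞) :=
        enorm_integral_le_lintegral_enorm _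
    _ = _ := lintegral_congr fun y => Real.enorm_eq_ofReal_abs (f y)

lemma decay_int : ∫⁻ x : ℝ, ENNReal.ofReal ((Real.exp 1 + |x|) ^ (-2:ℝ)) ≤ 4 := by
  have hpt : ∀ x : ℝ, ENNReal.ofReal ((Real.exp 1 + |x|) ^ (-2:ℝ))
      ≤ ENNReal.ofReal ((1 + x ^ 2)⁻¹) := by
    intro x
    apply ENNReal.ofReal_le_ofReal
    have he : (2:ℝ) ≤ Real.exp 1 := by
      have := Real.exp_one_gt_d9; linarith
    have hpos : (0:ℝ) < Real.exp 1 + |x| := by positivity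
    rw [Real.rpow_neg hpos.le]
    have h2 : (Real.exp 1 + |x|) ^ (2:ℝ) = (Real.exp 1 + |x|) ^ (2:ℕ) := by
      rw [← Real.rpow_natCast]; norm_num
    rw [h2]
    apply inv_anti₀ (by positivity)
    nlinarith [sq_abs x, abs_nonneg x]
  calc ∫⁻ x : ℝ, ENNReal.ofReal ((Real.exp 1 + |x|) ^ (-2:ℝ))
      ≤ ∫⁻ x : ℝ, ENNReal.ofReal ((1 + x ^ 2)⁻¹) := lintegral_mono hpt
    _ = ENNReal.ofReal (∫ x : ℝ, (1 + x ^ 2)⁻¹) := by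
        rw [ofReal_integral_eq_lintegral_ofReal integrable_inv_one_add_sq]
        · exact Filter.Eventually.of_forall fun x => by positivity
    _ = ENNReal.ofReal Real.pi := by rw [integral_univ_inv_one_add_sq]
    _ ≤ 4 := by
        rw [show (4:ℝ≥0∞) = ENNReal.ofReal 4 by norm_num]
        exact ENNReal.ofReal_le_ofReal (by linarith [Real.pi_le_four])

lemma strip_meas (τ : ℝ) (h : ℝ → ℝ≥0∞) (hh : Measurable h) :
    Measurable fun x => ∫⁻ y in Set.Ioc (x + τ - 1/2) (x + τ + 1/2), h y := by
  have hsetmeas : MeasurableSet {z : ℝ × ℝ | z.1 + τ - 1/2 < z.2 ∧ z.2 ≤ z.1 + τ + 1/2} := by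
    apply MeasurableSet.inter
    · exact measurableSet_lt (by measurability) measurable_snd
    · exact measurableSet_le measurable_snd (by measurability)
  have hF : Measurable (Function.uncurry fun x y =>
      (Set.Ioc (x + τ - 1/2) (x + τ + 1/2)).indicator h y) := by
    have : (Function.uncurry fun x y => (Set.Ioc (x + τ - 1/2) (x + τ + 1/2)).indicator h y)
        = {z : ℝ × ℝ | z.1 + τ - 1/2 < z.2 ∧ z.2 ≤ z.1 + τ + 1/2}.indicator (fun z => h z.2) := by
      funext z
      simp only [Function.uncurry, Set.indicator, Set.mem_Ioc, Set.mem_setOf_eq]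
    rw [this]
    exact (hh.comp measurable_snd).indicator hsetmeas
  have heq : (fun x => ∫⁻ y in Set.Ioc (x + τ - 1/2) (x + τ + 1/2), h y)
      = fun x => ∫⁻ y, (Set.Ioc (x + τ - 1/2) (x + τ + 1/2)).indicator h y := by
    funext x; rw [lintegral_indicator measurableSet_Ioc]
  rw [heq]
  exact Measurable.lintegral_prod_right hF

noncomputable def KrC (pplus c pinf : ℝ) : ℝ :=
  2 ^ pplus * ((Real.exp (2 * (pplus * pinf * c)) + 4) +
    (Real.exp (2 * (pplus * pinf * c)) * (Real.exp (2 * (pplus * pinf * c)) + 4) + 4))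

lemma modular_Uop (p : ℝ → ℝ) (hp : Measurable p) (pplus c pinf : ℝ)
    (hp1 : ∀ x, 1 ≤ p x) (hpb : ∀ x, p x ≤ pplus) (hpinf : 1 < pinf) (hc : 0 ≤ c)
    (hdec : ∀ x : ℝ, |1 / p x - 1 / pinf| ≤ c / Real.log (Real.exp 1 + |x|))
    (τ : ℝ) (f : ℝ → ℝ) (hf : Measurable f)
    (hS : ∫⁻ y, ENNReal.ofReal |f y| ^ (p y) ≤ 1) :
    ∫⁻ x, ENNReal.ofReal (|Uop τ f x| / max (KrC pplus c pinf) 1) ^ (p x) ≤ 1 := by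
  -- basic positivity facts
  have hpp1 : (1:ℝ) ≤ pplus := le_trans (hp1 0) (hpb 0)
  set C₁ : ℝ := pplus * pinf * c with hC₁def
  have hC₁ : 0 ≤ C₁ := by
    apply mul_nonneg (mul_nonneg (by linarith) (by linarith)) hc
  set Er : ℝ := Real.exp (2 * C₁) with hErdef
  have hEr0 : 0 < Er := Real.exp_pos _
  set E : ℝ≥0∞ := ENNReal.ofReal Er with hEdef
  set hfun : ℝ → ℝ≥0∞ := fun x => ENNReal.ofReal ((Real.exp 1 + |x|) ^ (-2:ℝ)) with hfundef
  have hIfun : ∫⁻ x : ℝ, hfun x ≤ 4 := by simp only [hfundef]; exact decay_int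
  -- the decay estimate for p itself
  have hd : ∀ x : ℝ, |p x - pinf| ≤ C₁ / Real.log (Real.exp 1 + |x|) := by
    intro x
    have hpx : 0 < p x := lt_of_lt_of_le one_pos (hp1 x)
    have hpi : (0:ℝ) < pinf := by linarith
    have hlogpos : 0 < Real.log (Real.exp 1 + |x|) := by
      have : (1:ℝ) ≤ Real.log (Real.exp 1 + |x|) := by
        calc (1:ℝ) = Real.log (Real.exp 1) := (Real.log_exp 1).symm
          _ ≤ _ := Real.log_le_log (Real.exp_pos 1) (le_add_of_nonneg_right (abs_nonneg x))
      linarith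
    have key : |p x - pinf| = p x * pinf * |1 / p x - 1 / pinf| := by
      have h0 : 1 / p x - 1 / pinf = (pinf - p x) / (p x * pinf) := by
        field_simp
      rw [h0, abs_div, abs_of_pos (mul_pos hpx hpi), abs_sub_comm pinf (p x)]
      field_simp
    rw [key]
    have t0 : 0 ≤ |1 / p x - 1 / pinf| := abs_nonneg _
    calc p x * pinf * |1 / p x - 1 / pinf|
        ≤ pplus * pinf * |1 / p x - 1 / pinf| := by
          apply mul_le_mul_of_nonneg_right _ t0
          apply mul_le_mul_of_nonneg_right (hpb x) hpi.le
      _ ≤ pplus * pinf * (c / Real.log (Real.exp 1 + |x|)) := by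
          apply mul_le_mul_of_nonneg_left (hdec x)
          apply mul_nonneg (by linarith) hpi.le
      _ = C₁ / Real.log (Real.exp 1 + |x|) := by rw [hC₁def]; ring
  -- splitting f
  set g : ℝ → ℝ≥0∞ := fun y => ENNReal.ofReal |f y| with hgdef
  have hgm : Measurable g := ENNReal.measurable_ofReal.comp hf.abs
  have hsetm : MeasurableSet {y : ℝ | 1 < |f y|} := measurableSet_lt measurable_const hf.abs
  set g1 : ℝ → ℝ≥0∞ := fun y => if 1 < |f y| then g y else 0 with hg1def
  set g2 : ℝ → ℝ≥0∞ := fun y => if 1 < |f y| then 0 else g y with hg2def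
  have hg1m : Measurable g1 := Measurable.ite hsetm hgm measurable_const
  have hg2m : Measurable g2 := Measurable.ite hsetm measurable_const hgm
  have hsum : ∀ y, g1 y + g2 y = g y := by
    intro y; by_cases h : 1 < |f y| <;> simp [hg1def, hg2def, h]
  have hg1le : ∀ y, g1 y ≤ g y ^ (p y) := by
    intro y
    by_cases h : 1 < |f y|
    · have hb : (1:ℝ≥0∞) ≤ g y := by
        rw [hgdef, ← ENNReal.ofReal_one]
        exact ENNReal.ofReal_le_ofReal h.le
      have : g y = g y ^ (1:ℝ) := (ENNReal.rpow_one _).symm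
      simp only [hg1def, if_pos h]
      calc g y = g y ^ (1:ℝ) := (ENNReal.rpow_one _).symm
        _ ≤ g y ^ (p y) := ENNReal.rpow_le_rpow_of_exponent_le hb (hp1 y)
    · simp [hg1def, if_neg h]
  have hg2le1 : ∀ y, g2 y ≤ 1 := by
    intro y
    by_cases h : 1 < |f y|
    · simp [hg2def, if_pos h]
    · simp only [hg2def, if_neg h]
      rw [hgdef, ← ENNReal.ofReal_one]
      exact ENNReal.ofReal_le_ofReal (by push_neg at h; exact h)
  have hg2leg : ∀ y, g2 y ≤ g y := by
    intro y; by_cases h : 1 < |f y| <;> simp [hg2def, h]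
  -- the averages
  set A1 : ℝ → ℝ≥0∞ := fun x => ∫⁻ y in Set.Ioc (x + τ - 1/2) (x + τ + 1/2), g1 y with hA1def
  set A2 : ℝ → ℝ≥0∞ := fun x => ∫⁻ y in Set.Ioc (x + τ - 1/2) (x + τ + 1/2), g2 y with hA2def
  have hA1m : Measurable A1 := strip_meas τ g1 hg1m
  have hA2m : Measurable A2 := strip_meas τ g2 hg2m
  have hJ1 : ∀ x : ℝ, volume (Set.Ioc (x + τ - 1/2) (x + τ + 1/2)) = 1 := by
    intro x
    rw [Real.volume_Ioc]
    have : x + τ + 1/2 - (x + τ - 1/2) = (1:ℝ) := by ring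
    rw [this, ENNReal.ofReal_one]
  have hA1top : ∀ x, A1 x ≤ 1 := by
    intro x
    calc A1 x ≤ ∫⁻ y in Set.Ioc (x + τ - 1/2) (x + τ + 1/2), g y ^ (p y) :=
          lintegral_mono fun y => hg1le y
      _ ≤ ∫⁻ y, g y ^ (p y) := setLIntegral_le_lintegral _ _
      _ ≤ 1 := hS
  have hA2top : ∀ x, A2 x ≤ 1 := by
    intro x
    calc A2 x ≤ ∫⁻ _ in Set.Ioc (x + τ - 1/2) (x + τ + 1/2), (1:ℝ≥0∞) :=
          lintegral_mono fun y => hg2le1 y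
      _ = volume (Set.Ioc (x + τ - 1/2) (x + τ + 1/2)) := by
          rw [setLIntegral_const, one_mul]
      _ = 1 := hJ1 x
  have hMx : ∀ x : ℝ, Real.exp 1 ≤ Real.exp 1 + |x| :=
    fun x => le_add_of_nonneg_right (abs_nonneg x)
  -- bound for the first piece
  have hB1 : ∫⁻ x, A1 x ^ (p x) ≤ E * 1 + 4 := by
    have hpt : ∀ x, A1 x ^ (p x) ≤ E * A1 x + hfun x := by
      intro x
      have h1 := keyExp hC₁ (hA1top x) (hp1 x) hpinf.le (hMx x) (hd x)
      have h2 : A1 x ^ pinf ≤ A1 x := by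
        calc A1 x ^ pinf ≤ A1 x ^ (1:ℝ) :=
              ENNReal.rpow_le_rpow_of_exponent_ge (hA1top x) hpinf.le
          _ = A1 x := ENNReal.rpow_one _
      calc A1 x ^ (p x) ≤ E * A1 x ^ pinf + hfun x := h1
        _ ≤ E * A1 x + hfun x := by gcongr
    calc ∫⁻ x, A1 x ^ (p x) ≤ ∫⁻ x, (E * A1 x + hfun x) := lintegral_mono hpt
      _ = E * (∫⁻ x, A1 x) + ∫⁻ x, hfun x := by
          rw [lintegral_add_left (hA1m.const_mul E), lintegral_const_mul E hA1m]
      _ ≤ E * 1 + 4 := by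
          apply add_le_add _ hIfun
          apply mul_le_mul_right
          calc ∫⁻ x, A1 x = ∫⁻ y, g1 y := fubini_strip τ g1 hg1m
            _ ≤ ∫⁻ y, g y ^ (p y) := lintegral_mono fun y => hg1le y
            _ ≤ 1 := hS
  -- bound for the second piece
  have hg2pm : Measurable fun y => g2 y ^ pinf := hg2m.pow measurable_const
  have hB2 : ∫⁻ x, A2 x ^ (p x) ≤ E * (E * 1 + 4) + 4 := by
    have hjensen : ∀ x, A2 x ^ pinf ≤ ∫⁻ y in Set.Ioc (x + τ - 1/2) (x + τ + 1/2), g2 y ^ pinf := by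
      intro x
      haveI : IsProbabilityMeasure (volume.restrict (Set.Ioc (x + τ - 1/2) (x + τ + 1/2))) := by
        constructor
        rw [Measure.restrict_apply_univ]
        exact hJ1 x
      exact jensen_unit hpinf _ g2 hg2m.aemeasurable
    have hpt : ∀ x, A2 x ^ (p x) ≤
        E * (∫⁻ y in Set.Ioc (x + τ - 1/2) (x + τ + 1/2), g2 y ^ pinf) + hfun x := by
      intro x
      have h1 := keyExp hC₁ (hA2top x) (hp1 x) hpinf.le (hMx x) (hd x)
      calc A2 x ^ (p x) ≤ E * A2 x ^ pinf + hfun x := h1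
        _ ≤ _ := by gcongr; exact hjensen x
    have hin : ∫⁻ y, g2 y ^ pinf ≤ E * 1 + 4 := by
      have hpt2 : ∀ y, g2 y ^ pinf ≤ E * (g y ^ (p y)) + hfun y := by
        intro y
        have h1 := keyExp hC₁ (hg2le1 y) hpinf.le (hp1 y) (hMx y)
          (by rw [abs_sub_comm]; exact hd y)
        calc g2 y ^ pinf ≤ E * g2 y ^ (p y) + hfun y := h1
          _ ≤ E * (g y ^ (p y)) + hfun y :=
              add_le_add_left (mul_le_mul_right
                (ENNReal.rpow_le_rpow (hg2leg y) (by linarith [hp1 y])) E) _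
      have hgpm : Measurable fun y => g y ^ (p y) := hgm.pow hp
      calc ∫⁻ y, g2 y ^ pinf ≤ ∫⁻ y, (E * (g y ^ (p y)) + hfun y) := lintegral_mono hpt2
        _ = E * (∫⁻ y, g y ^ (p y)) + ∫⁻ y, hfun y := by
            rw [lintegral_add_left (hgpm.const_mul E), lintegral_const_mul E hgpm]
        _ ≤ E * 1 + 4 := add_le_add (mul_le_mul_right hS E) hIfun
    have hstripm : Measurable fun x =>
        ∫⁻ y in Set.Ioc (x + τ - 1/2) (x + τ + 1/2), g2 y ^ pinf := strip_meas τ _ hg2pm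
    calc ∫⁻ x, A2 x ^ (p x)
        ≤ ∫⁻ x, (E * (∫⁻ y in Set.Ioc (x + τ - 1/2) (x + τ + 1/2), g2 y ^ pinf) + hfun x) :=
          lintegral_mono hpt
      _ = E * (∫⁻ x, (∫⁻ y in Set.Ioc (x + τ - 1/2) (x + τ + 1/2), g2 y ^ pinf))
          + ∫⁻ x, hfun x := by
          rw [lintegral_add_left (hstripm.const_mul E), lintegral_const_mul E hstripm]
      _ ≤ E * (E * 1 + 4) + 4 := by
          apply add_le_add _ hIfun
          apply mul_le_mul_right
          calc ∫⁻ x, (∫⁻ y in Set.Ioc (x + τ - 1/2) (x + τ + 1/2), g2 y ^ pinf)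
              = ∫⁻ y, g2 y ^ pinf := fubini_strip τ _ hg2pm
            _ ≤ E * 1 + 4 := hin
  -- total bound
  have hT : ∫⁻ x, (A1 x + A2 x) ^ (p x) ≤
      (2:ℝ≥0∞) ^ pplus * ((E * 1 + 4) + (E * (E * 1 + 4) + 4)) := by
    have hpt : ∀ x, (A1 x + A2 x) ^ (p x) ≤ (2:ℝ≥0∞) ^ pplus * (A1 x ^ (p x) + A2 x ^ (p x)) := by
      intro x
      calc (A1 x + A2 x) ^ (p x) ≤ 2 ^ (p x) * (A1 x ^ (p x) + A2 x ^ (p x)) :=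
            add_rpow_le2 _ _ (by linarith [hp1 x])
        _ ≤ (2:ℝ≥0∞) ^ pplus * (A1 x ^ (p x) + A2 x ^ (p x)) := by
            apply mul_le_mul_left
            exact ENNReal.rpow_le_rpow_of_exponent_le (by norm_num) (hpb x)
    have hm1 : Measurable fun x => A1 x ^ (p x) := hA1m.pow hp
    have hm2 : Measurable fun x => A2 x ^ (p x) := hA2m.pow hp
    calc ∫⁻ x, (A1 x + A2 x) ^ (p x)
        ≤ ∫⁻ x, (2:ℝ≥0∞) ^ pplus * (A1 x ^ (p x) + A2 x ^ (p x)) := lintegral_mono hpt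
      _ = (2:ℝ≥0∞) ^ pplus * ((∫⁻ x, A1 x ^ (p x)) + ∫⁻ x, A2 x ^ (p x)) := by
          rw [lintegral_const_mul (f := fun x => A1 x ^ (p x) + A2 x ^ (p x)) _ (hm1.add hm2), lintegral_add_left hm1]
      _ ≤ _ := mul_le_mul_right (add_le_add hB1 hB2) _
  -- identify the constant
  have hKr : (2:ℝ≥0∞) ^ pplus * ((E * 1 + 4) + (E * (E * 1 + 4) + 4))
      = ENNReal.ofReal (KrC pplus c pinf) := by
    have h2 : (2:ℝ≥0∞) ^ (pplus:ℝ) = ENNReal.ofReal ((2:ℝ) ^ pplus) := by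
      rw [show (2:ℝ≥0∞) = ENNReal.ofReal 2 by norm_num,
        ENNReal.ofReal_rpow_of_pos (by norm_num)]
    have h4 : (4:ℝ≥0∞) = ENNReal.ofReal 4 := by norm_num
    rw [mul_one (E : ℝ≥0∞), KrC, h2, h4, hEdef]
    rw [← ENNReal.ofReal_add hEr0.le (by norm_num)]
    rw [← ENNReal.ofReal_mul hEr0.le]
    rw [← ENNReal.ofReal_add (by positivity) (by norm_num)]
    rw [← ENNReal.ofReal_add (by positivity) (by positivity)]
    rw [← ENNReal.ofReal_mul (by positivity)]
  set Cr : ℝ := max (KrC pplus c pinf) 1 with hCrdef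
  have hCr1 : (1:ℝ) ≤ Cr := le_max_right _ _
  have hCrpos : (0:ℝ) < Cr := lt_of_lt_of_le one_pos hCr1
  set cinv : ℝ≥0∞ := (ENNReal.ofReal Cr)⁻¹ with hcinvdef
  have hofCr0 : ENNReal.ofReal Cr ≠ 0 := (ENNReal.ofReal_pos.2 hCrpos).ne'
  have hcinvle1 : cinv ≤ 1 := by
    rw [hcinvdef, ENNReal.inv_le_one, ← ENNReal.ofReal_one]
    exact ENNReal.ofReal_le_ofReal hCr1
  have hcinvtop : cinv ≠ ⊤ := ENNReal.inv_ne_top.2 hofCr0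
  -- pointwise bound for the normalized modular
  have hptfin : ∀ x, ENNReal.ofReal (|Uop τ f x| / Cr) ^ (p x)
      ≤ (A1 x + A2 x) ^ (p x) * cinv := by
    intro x
    have hU : ENNReal.ofReal |Uop τ f x| ≤ A1 x + A2 x := by
      calc ENNReal.ofReal |Uop τ f x|
          ≤ ∫⁻ y in Set.Ioc (x + τ - 1/2) (x + τ + 1/2), ENNReal.ofReal |f y| :=
            Uop_bound τ f x
        _ = ∫⁻ y in Set.Ioc (x + τ - 1/2) (x + τ + 1/2), (g1 y + g2 y) := by
            apply lintegral_congr; intro y; rw [hsum y]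
        _ = A1 x + A2 x := lintegral_add_left hg1m g2
    have h0 : ENNReal.ofReal (|Uop τ f x| / Cr) = ENNReal.ofReal |Uop τ f x| * cinv := by
      rw [ENNReal.ofReal_div_of_pos hCrpos, div_eq_mul_inv]
    calc ENNReal.ofReal (|Uop τ f x| / Cr) ^ (p x)
        = (ENNReal.ofReal |Uop τ f x| * cinv) ^ (p x) := by rw [h0]
      _ ≤ ((A1 x + A2 x) * cinv) ^ (p x) :=
          ENNReal.rpow_le_rpow (mul_le_mul_left hU cinv) (by linarith [hp1 x])
      _ = (A1 x + A2 x) ^ (p x) * cinv ^ (p x) :=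
          ENNReal.mul_rpow_of_nonneg _ _ (by linarith [hp1 x])
      _ ≤ (A1 x + A2 x) ^ (p x) * cinv := by
          apply mul_le_mul_right
          calc cinv ^ (p x) ≤ cinv ^ (1:ℝ) :=
                ENNReal.rpow_le_rpow_of_exponent_ge hcinvle1 (hp1 x)
            _ = cinv := ENNReal.rpow_one _
  calc ∫⁻ x, ENNReal.ofReal (|Uop τ f x| / Cr) ^ (p x)
      ≤ ∫⁻ x, (A1 x + A2 x) ^ (p x) * cinv := lintegral_mono hptfin
    _ = (∫⁻ x, (A1 x + A2 x) ^ (p x)) * cinv := lintegral_mul_const' cinv _ hcinvtop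
    _ ≤ ENNReal.ofReal (KrC pplus c pinf) * cinv := by
        rw [← hKr]; exact mul_le_mul_left hT cinv
    _ ≤ ENNReal.ofReal Cr * cinv := by
        apply mul_le_mul_left
        exact ENNReal.ofReal_le_ofReal (le_max_left _ _)
    _ = 1 := ENNReal.mul_inv_cancel hofCr0 ENNReal.ofReal_ne_top

lemma modular_Uop_scaled (p : ℝ → ℝ) (hp : Measurable p) (pplus c pinf : ℝ)
    (hp1 : ∀ x, 1 ≤ p x) (hpb : ∀ x, p x ≤ pplus) (hpinf : 1 < pinf) (hc : 0 ≤ c)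
    (hdec : ∀ x : ℝ, |1 / p x - 1 / pinf| ≤ c / Real.log (Real.exp 1 + |x|))
    (τ : ℝ) (f : ℝ → ℝ) (hf : Measurable f) (η : ℝ) (hη : 0 < η)
    (hmod : vModular p f η ≤ 1) :
    vModular p (Uop τ f) (max (KrC pplus c pinf) 1 * η) ≤ 1 := by
  set f' : ℝ → ℝ := fun y => f y / η with hf'def
  have hf' : Measurable f' := hf.div_const η
  have hS' : ∫⁻ y, ENNReal.ofReal |f' y| ^ (p y) ≤ 1 := by
    calc ∫⁻ y, ENNReal.ofReal |f' y| ^ (p y) = vModular p f η := by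
          rw [vModular]; apply lintegral_congr; intro y
          rw [hf'def]; rw [abs_div, abs_of_pos hη]
      _ ≤ 1 := hmod
  have hmain := modular_Uop p hp pplus c pinf hp1 hpb hpinf hc hdec τ f' hf' hS'
  have hUeq : ∀ x, Uop τ f' x = Uop τ f x / η := by
    intro x; rw [Uop, Uop]; exact intervalIntegral.integral_div η _
  calc vModular p (Uop τ f) (max (KrC pplus c pinf) 1 * η)
      = ∫⁻ x, ENNReal.ofReal (|Uop τ f' x| / max (KrC pplus c pinf) 1) ^ (p x) := by
        rw [vModular]; apply lintegral_congr; intro x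
        rw [hUeq x]
        have : |Uop τ f x / η| / max (KrC pplus c pinf) 1
            = |Uop τ f x| / (max (KrC pplus c pinf) 1 * η) := by
          rw [abs_div, abs_of_pos hη, div_div, mul_comm]
        rw [this]
    _ ≤ 1 := hmain

lemma memVLp_exists (p : ℝ → ℝ) (f : ℝ → ℝ) (hp1 : ∀ x, 1 ≤ p x) (hf : MemVLp p f) :
    ∃ η : ℝ, 0 < η ∧ vModular p f η ≤ 1 := by
  obtain ⟨hfm, lam, hlam, hfin⟩ := hf
  set Mr : ℝ := (vModular p f lam).toReal with hMrdef
  have hMr0 : 0 ≤ Mr := ENNReal.toReal_nonneg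
  have hMr1 : (0:ℝ) < Mr + 1 := by linarith
  refine ⟨lam * (Mr + 1), by positivity, ?_⟩
  have hpt : ∀ y, ENNReal.ofReal (|f y| / (lam * (Mr + 1))) ^ (p y)
      ≤ ENNReal.ofReal (|f y| / lam) ^ (p y) * ENNReal.ofReal (1 / (Mr + 1)) := by
    intro y
    have h1 : |f y| / (lam * (Mr + 1)) = (|f y| / lam) * (1 / (Mr + 1)) := by
      field_simp
    rw [h1, ENNReal.ofReal_mul (by positivity),
      ENNReal.mul_rpow_of_nonneg _ _ (by linarith [hp1 y])]
    apply mul_le_mul_right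
    have hle1 : ENNReal.ofReal (1 / (Mr + 1)) ≤ 1 := by
      rw [← ENNReal.ofReal_one]
      apply ENNReal.ofReal_le_ofReal
      rw [div_le_one hMr1]; linarith
    calc ENNReal.ofReal (1 / (Mr + 1)) ^ (p y)
        ≤ ENNReal.ofReal (1 / (Mr + 1)) ^ (1:ℝ) :=
          ENNReal.rpow_le_rpow_of_exponent_ge hle1 (hp1 y)
      _ = _ := ENNReal.rpow_one _
  calc vModular p f (lam * (Mr + 1))
      ≤ ∫⁻ y, ENNReal.ofReal (|f y| / lam) ^ (p y) * ENNReal.ofReal (1 / (Mr + 1)) :=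
        lintegral_mono hpt
    _ = vModular p f lam * ENNReal.ofReal (1 / (Mr + 1)) := by
        rw [lintegral_mul_const' _ _ ENNReal.ofReal_ne_top]; rfl
    _ ≤ 1 := by
        rw [← ENNReal.ofReal_toReal hfin.ne, ← hMrdef, ← ENNReal.ofReal_mul hMr0,
          ← ENNReal.ofReal_one]
        apply ENNReal.ofReal_le_ofReal
        rw [mul_one_div, div_le_one hMr1]; linarith

theorem steklov_translate_uniformly_bounded
    (p : ℝ → ℝ) (hp : Measurable p) (pplus c : ℝ)
    (hp1 : ∀ x, 1 ≤ p x) (hpb : ∀ x, p x ≤ pplus)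
    (hlog : ∀ x y : ℝ, x ≠ y →
      |1 / p x - 1 / p y| ≤ c / Real.log (Real.exp 1 + 1 / |x - y|))
    (hdecay : ∃ pinf : ℝ, 1 < pinf ∧
      ∀ x : ℝ, |1 / p x - 1 / pinf| ≤ c / Real.log (Real.exp 1 + |x|)) :
    ∃ C : ℝ, 0 < C ∧ ∀ τ : ℝ, ∀ f : ℝ → ℝ, MemVLp p f →
      luxNorm p (Uop τ f) ≤ C * luxNorm p f := by
  obtain ⟨pinf, hpinf, hdec⟩ := hdecay
  have hc : 0 ≤ c := by
    have h0 := hdec 0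
    have hlog0 : Real.log (Real.exp 1 + |(0:ℝ)|) = 1 := by
      simp [Real.log_exp]
    rw [hlog0, div_one] at h0
    exact le_trans (abs_nonneg _) h0
  set C : ℝ := max (KrC pplus c pinf) 1 with hCdef
  have hC1 : (1:ℝ) ≤ C := le_max_right _ _
  have hCpos : (0:ℝ) < C := lt_of_lt_of_le one_pos hC1
  refine ⟨C, hCpos, ?_⟩
  intro τ f hfmem
  have hfm : Measurable f := hfmem.1
  obtain ⟨η₀, hη₀, hmod₀⟩ := memVLp_exists p f hp1 hfmem
  have hSf : Set.Nonempty {η : ℝ | 0 < η ∧ vModular p f η ≤ 1} := ⟨η₀, ⟨hη₀, hmod₀⟩⟩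
  have hupper : ∀ η ∈ {η : ℝ | 0 < η ∧ vModular p f η ≤ 1},
      luxNorm p (Uop τ f) ≤ C * η := by
    rintro η ⟨hη, hmod⟩
    have hsc := modular_Uop_scaled p hp pplus c pinf hp1 hpb hpinf hc hdec τ f hfm η hη hmod
    apply csInf_le
    · exact ⟨0, fun x hx => hx.1.le⟩
    · exact ⟨by positivity, hsc⟩
  have hdivle : luxNorm p (Uop τ f) / C ≤ luxNorm p f := by
    apply le_csInf hSf
    intro η hη
    rw [div_le_iff₀ hCpos]
    calc luxNorm p (Uop τ f) ≤ C * η := hupper η hη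
      _ = η * C := mul_comm _ _
  calc luxNorm p (Uop τ f) = (luxNorm p (Uop τ f) / C) * C := by field_simp
    _ ≤ luxNorm p f * C := mul_le_mul_of_nonneg_right hdivle hCpos.le
    _ = C * luxNorm p f := mul_comm _ _
end
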